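/- arXiv:1401.7213 — 3 statements merged into one kernel-verified Lean document; each statement's English description precedes it below -/
import Mathlib

section
/- Let ξ : [0,T] → ℝ be nonnegative, nonincreasing, and convex (so that ξ is a completely monotone type kernel). Then ξ is of positive type: for every continuous function φ : [0,T] → ℝ, ∫₀ᵀ ∫₀ᵗ ξ(t−s) φ(t) φ(s) ds dt ≥ 0. -/
open MeasureTheory Set Filter

namespace PosTypeKernel

/-- Continuity of a globally antitone, convex-on-`[0,T]` function on `[x,T]`, `0 < x`. -/
lemma cont_on {T : ℝ} {ξ : ℝ → ℝ} (hanti : Antitone ξ)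
    (hconv : ConvexOn ℝ (Icc 0 T) ξ) {x : ℝ} (hx0 : 0 < x) (hxT : x ≤ T) :
    ContinuousOn ξ (Icc x T) := by
  rcases eq_or_lt_of_le hxT with rfl | hxT
  · intro u hu
    rw [Icc_self] at hu
    rw [Icc_self, show u = x from hu]
    exact continuousWithinAt_singleton
  · intro u hu
    rcases eq_or_lt_of_le hu.2 with huT | huT
    · -- u = T : squeeze from both sides
      subst huT
      have hxu : x < u := hxT
      have hne : u - x ≠ 0 := sub_ne_zero.2 (ne_of_gt hxu)
      unfold ContinuousWithinAt
      have hlow : Tendsto (fun _ : ℝ => ξ u) (nhdsWithin u (Icc x u)) (nhds (ξ u)) :=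
        tendsto_const_nhds
      have hup : Tendsto (fun w => ξ x + (w - x) * ((ξ u - ξ x) / (u - x)))
          (nhdsWithin u (Icc x u)) (nhds (ξ u)) := by
        have hc : ContinuousAt (fun w => ξ x + (w - x) * ((ξ u - ξ x) / (u - x))) u := by
          fun_prop
        have h3 : Tendsto (fun w => ξ x + (w - x) * ((ξ u - ξ x) / (u - x)))
            (nhdsWithin u (Icc x u)) (nhds (ξ x + (u - x) * ((ξ u - ξ x) / (u - x)))) :=
          hc.tendsto.mono_left nhdsWithin_le_nhds
        have h4 : ξ x + (u - x) * ((ξ u - ξ x) / (u - x)) = ξ u := by field_simp; ring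
        rwa [h4] at h3
      refine tendsto_of_tendsto_of_tendsto_of_le_of_le' hlow hup ?_ ?_
      · filter_upwards [self_mem_nhdsWithin] with w hw
        exact hanti hw.2
      · filter_upwards [self_mem_nhdsWithin] with w hw
        have hxm : x ∈ Icc (0:ℝ) u := ⟨hx0.le, hxu.le⟩
        have hum : u ∈ Icc (0:ℝ) u := ⟨(hx0.trans hxu).le, le_rfl⟩
        set a := (u - w) / (u - x) with ha_def
        set b := (w - x) / (u - x) with hb_def
        have ha : 0 ≤ a := div_nonneg (by linarith [hw.2]) (by linarith)
        have hb : 0 ≤ b := div_nonneg (by linarith [hw.1]) (by linarith)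
        have hab : a + b = 1 := by
          rw [ha_def, hb_def, ← add_div, div_eq_one_iff_eq hne]; ring
        have hcomb := hconv.2 hxm hum ha hb hab
        have hxw : a • x + b • u = w := by
          simp only [smul_eq_mul, ha_def, hb_def]
          field_simp
          ring
        rw [hxw] at hcomb
        calc ξ w ≤ a * ξ x + b * ξ u := hcomb
          _ = ξ x + (w - x) * ((ξ u - ξ x) / (u - x)) := by
              simp only [ha_def, hb_def]; field_simp; ring
    · -- u interior
      have hmem : u ∈ Ioo (0:ℝ) T := ⟨lt_of_lt_of_le hx0 hu.1, huT⟩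
      have h1 : ContinuousAt ξ u := by
        have h2 := hconv.continuousOn_interior
        rw [interior_Icc] at h2
        exact h2.continuousAt (Ioo_mem_nhds hmem.1 hmem.2)
      exact h1.continuousWithinAt



section B
variable {T : ℝ} {ξ : ℝ → ℝ}

/-- right-derivative candidate -/
noncomputable def rd (ξ : ℝ → ℝ) (T : ℝ) : ℝ → ℝ := fun u => sInf (slope ξ u '' Ioo u T)

lemma rd_nonpos (hanti : Antitone ξ) (u : ℝ) : rd ξ T u ≤ 0 := by
  rcases lt_or_ge u T with h | h
  · by_cases hb : BddBelow (slope ξ u '' Ioo u T)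
    · have hmem : (u + T) / 2 ∈ Ioo u T := ⟨by linarith, by linarith⟩
      refine le_trans (csInf_le hb (mem_image_of_mem _ hmem)) ?_
      rw [slope_def_field]
      apply div_nonpos_of_nonpos_of_nonneg
      · have := hanti (le_of_lt hmem.1); linarith
      · linarith [hmem.1]
    · rw [rd, Real.sInf_of_not_bddBelow hb]
  · rw [rd, Ioo_eq_empty (by linarith), image_empty, Real.sInf_empty]

lemma slope_monoOn (hconv : ConvexOn ℝ (Icc 0 T) ξ) {u : ℝ} (hu : u ∈ Ioo 0 T) :
    MonotoneOn (slope ξ u) (Ioo u T) := by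
  intro y hy z hz hyz
  rw [slope_def_field, slope_def_field]
  exact hconv.secant_mono ⟨hu.1.le, hu.2.le⟩ ⟨(hu.1.trans hy.1).le, hy.2.le⟩
    ⟨(hu.1.trans hz.1).le, hz.2.le⟩ (ne_of_gt hy.1) (ne_of_gt hz.1) hyz

lemma slope_bddBelow (hconv : ConvexOn ℝ (Icc 0 T) ξ) {u : ℝ} (hu : u ∈ Ioo 0 T) :
    BddBelow (slope ξ u '' Ioo u T) := by
  refine ⟨(ξ u - ξ 0) / (u - 0), ?_⟩
  rintro _ ⟨y, hy, rfl⟩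
  rw [slope_def_field]
  exact hconv.slope_mono_adjacent ⟨le_rfl, (hu.1.trans hu.2).le⟩
    ⟨(hu.1.trans hy.1).le, hy.2.le⟩ hu.1 hy.1

lemma rd_hasDeriv (hconv : ConvexOn ℝ (Icc 0 T) ξ) {u : ℝ} (hu : u ∈ Ioo 0 T) :
    HasDerivWithinAt ξ (rd ξ T u) (Ioi u) u := by
  rw [hasDerivWithinAt_iff_tendsto_slope,
    Set.diff_singleton_eq_self (notMem_Ioi.2 le_rfl)]
  exact MonotoneOn.tendsto_nhdsWithin_Ioo_right ⟨(u + T) / 2, by constructor <;>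
    [linarith [hu.2]; linarith [hu.2]]⟩ (slope_monoOn hconv hu) (slope_bddBelow hconv hu)

lemma rd_mono (hanti : Antitone ξ) (hconv : ConvexOn ℝ (Icc 0 T) ξ) :
    ∀ u v, 0 < u → u ≤ v → v ≤ T → rd ξ T u ≤ rd ξ T v := by
  intro u v hu huv hvT
  rcases eq_or_lt_of_le huv with rfl | huv
  · exact le_rfl
  rcases eq_or_lt_of_le hvT with hvT' | hvT
  · calc rd ξ T u ≤ 0 := rd_nonpos hanti u
      _ = rd ξ T v := by rw [rd, hvT', Ioo_self, image_empty, Real.sInf_empty]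
  have huI : u ∈ Ioo 0 T := ⟨hu, huv.trans hvT⟩
  have h1 : rd ξ T u ≤ slope ξ u v :=
    csInf_le (slope_bddBelow hconv huI) (mem_image_of_mem _ ⟨huv, hvT⟩)
  refine h1.trans (le_csInf ⟨slope ξ v ((v + T)/2), mem_image_of_mem _ ⟨by linarith, by linarith⟩⟩ ?_)
  rintro _ ⟨y, hy, rfl⟩
  rw [slope_def_field, slope_def_field]
  exact hconv.slope_mono_adjacent ⟨hu.le, (huv.trans hvT).le⟩
    ⟨(hu.trans (huv.trans hy.1)).le, hy.2.le⟩ huv hy.1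

lemma rd_intervalIntegrable (hanti : Antitone ξ) (hconv : ConvexOn ℝ (Icc 0 T) ξ)
    {x : ℝ} (hx0 : 0 < x) (hxT : x ≤ T) : IntervalIntegrable (rd ξ T) volume x T := by
  apply MonotoneOn.intervalIntegrable
  rw [uIcc_of_le hxT]
  intro u hu v hv huv
  exact rd_mono hanti hconv u v (hx0.trans_le hu.1) huv hv.2

lemma rd_ftc (hanti : Antitone ξ) (hconv : ConvexOn ℝ (Icc 0 T) ξ)
    {x : ℝ} (hx0 : 0 < x) (hxT : x ≤ T) :
    ∫ u in x..T, rd ξ T u = ξ T - ξ x :=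
  intervalIntegral.integral_eq_sub_of_hasDeriv_right_of_le hxT
    (cont_on hanti hconv hx0 hxT)
    (fun u hu => rd_hasDeriv hconv ⟨hx0.trans hu.1, hu.2⟩)
    (rd_intervalIntegrable hanti hconv hx0 hxT)

lemma rd_integrableOn (hT : 0 < T) (hanti : Antitone ξ) (hconv : ConvexOn ℝ (Icc 0 T) ξ) :
    IntegrableOn (rd ξ T) (Ioc 0 T) volume := by
  have ha : Tendsto (fun n : ℕ => T / ((n : ℝ) + 2)) atTop (nhds 0) := by
    have h1 : Tendsto (fun n : ℕ => T / (n : ℝ)) atTop (nhds 0) :=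
      tendsto_const_div_atTop_nhds_zero_nat T
    have h2 := h1.comp (tendsto_add_atTop_nat 2)
    have heq : (fun n : ℕ => T / ((n : ℝ) + 2)) = (fun n : ℕ => T / (n : ℝ)) ∘ (fun n => n + 2) := by
      funext n
      simp only [Function.comp_apply]
      norm_cast
    rw [heq]
    exact h2
  have hmem : ∀ n : ℕ, 0 < T / ((n : ℝ) + 2) ∧ T / ((n : ℝ) + 2) ≤ T := by
    intro n
    constructor
    · positivity
    · rw [div_le_iff₀ (by positivity)]
      nlinarith [Nat.cast_nonneg (α := ℝ) n]
  refine integrableOn_Ioc_of_intervalIntegral_norm_bounded_left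
    (I := ξ 0 - ξ T) (fun n => ((rd_intervalIntegrable hanti hconv (hmem n).1 (hmem n).2)).1)
    ha (Eventually.of_forall fun n => ?_)
  have h1 : ∀ u, ‖rd ξ T u‖ = -(rd ξ T u) := fun u => by
    rw [Real.norm_eq_abs, abs_of_nonpos (rd_nonpos hanti u)]
  calc ∫ u in Ioc (T / ((n:ℝ)+2)) T, ‖rd ξ T u‖
      = ∫ u in Ioc (T / ((n:ℝ)+2)) T, -(rd ξ T u) := by
        apply setIntegral_congr_fun measurableSet_Ioc
        intro u _; exact h1 u
    _ = -(∫ u in (T / ((n:ℝ)+2))..T, rd ξ T u) := by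
        rw [intervalIntegral.integral_of_le (hmem n).2, integral_neg]
    _ = ξ (T / ((n:ℝ)+2)) - ξ T := by
        rw [rd_ftc hanti hconv (hmem n).1 (hmem n).2]; ring
    _ ≤ ξ 0 - ξ T := by
        have := hanti (hmem n).1.le; linarith

end B



lemma finmeas (T : ℝ) : IsFiniteMeasure (volume.restrict (Ioc (0:ℝ) T)) := by
  constructor
  rw [Measure.restrict_apply_univ, Real.volume_Ioc]
  exact ENNReal.ofReal_lt_top

lemma int_of_bdd {α : Type*} [MeasurableSpace α] {μ : Measure α} [IsFiniteMeasure μ]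
    {h : α → ℝ} (hm : AEStronglyMeasurable h μ) {C : ℝ} (hC : ∀ a, |h a| ≤ C) :
    Integrable h μ :=
  Integrable.mono' (integrable_const C) hm
    (Eventually.of_forall fun a => by simpa [Real.norm_eq_abs] using hC a)

/-- Symmetrization: the triangle integral is half the square of the integral. -/
lemma tri (T : ℝ) (f : ℝ → ℝ) (hfm : Measurable f)
    (hfi : Integrable f (volume.restrict (Ioc (0:ℝ) T))) :
    ∫ p : ℝ × ℝ, (if p.2 < p.1 then f p.1 * f p.2 else 0)
      ∂((volume.restrict (Ioc (0:ℝ) T)).prod (volume.restrict (Ioc (0:ℝ) T)))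
      = (∫ x, f x ∂(volume.restrict (Ioc (0:ℝ) T)))^2 / 2 := by
  set μ := volume.restrict (Ioc (0:ℝ) T) with hμ
  set π := μ.prod μ with hπ
  have hprodint : Integrable (fun p : ℝ × ℝ => f p.1 * f p.2) π := hfi.mul_prod hfi
  have hmeas1 : Measurable fun p : ℝ × ℝ => (if p.2 < p.1 then f p.1 * f p.2 else 0) :=
    Measurable.ite (measurableSet_lt measurable_snd measurable_fst)
      ((hfm.comp measurable_fst).mul (hfm.comp measurable_snd)) measurable_const
  have hmeas2 : Measurable fun p : ℝ × ℝ => (if p.1 < p.2 then f p.1 * f p.2 else 0) :=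
    Measurable.ite (measurableSet_lt measurable_fst measurable_snd)
      ((hfm.comp measurable_fst).mul (hfm.comp measurable_snd)) measurable_const
  have habs : Integrable (fun p : ℝ × ℝ => |f p.1 * f p.2|) π := hprodint.abs
  have hint1 : Integrable (fun p : ℝ × ℝ => if p.2 < p.1 then f p.1 * f p.2 else 0) π := by
    refine habs.mono' hmeas1.aestronglyMeasurable (Eventually.of_forall fun p => ?_)
    by_cases h : p.2 < p.1 <;> simp [h, Real.norm_eq_abs, abs_abs, le_abs_self, abs_nonneg, abs_mul] <;> positivity
  have hint2 : Integrable (fun p : ℝ × ℝ => if p.1 < p.2 then f p.1 * f p.2 else 0) π := by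
    refine habs.mono' hmeas2.aestronglyMeasurable (Eventually.of_forall fun p => ?_)
    by_cases h : p.1 < p.2 <;> simp [h, Real.norm_eq_abs, abs_abs, le_abs_self, abs_nonneg, abs_mul] <;> positivity
  have hswap : ∫ p, (if p.1 < p.2 then f p.1 * f p.2 else 0) ∂π
      = ∫ p, (if p.2 < p.1 then f p.1 * f p.2 else 0) ∂π := by
    have h1 : Measure.map Prod.swap π = π := by rw [hπ]; exact Measure.prod_swap
    conv_rhs => rw [← h1]
    rw [integral_map measurable_swap.aemeasurable hmeas1.aestronglyMeasurable]
    congr 1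
    funext p
    by_cases h : p.1 < p.2 <;> simp [h, mul_comm]
  have hdiagm : MeasurableSet {p : ℝ × ℝ | p.1 = p.2} :=
    measurableSet_eq_fun measurable_fst measurable_snd
  have hdiag : π {p : ℝ × ℝ | p.1 = p.2} = 0 := by
    rw [hπ, Measure.prod_apply hdiagm]
    have h0 : ∀ x : ℝ, μ (Prod.mk x ⁻¹' {p : ℝ × ℝ | p.1 = p.2}) = 0 := by
      intro x
      have hset : (Prod.mk x ⁻¹' {p : ℝ × ℝ | p.1 = p.2}) = {x} := by
        ext y; simp [eq_comm]
      rw [hset, hμ]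
      exact measure_singleton x
    simp [h0]
  have hae : ∀ᵐ p ∂π, p.1 ≠ p.2 := by
    rw [ae_iff]
    simpa [not_not] using hdiag
  have hsum : (∫ p, (if p.2 < p.1 then f p.1 * f p.2 else 0) ∂π)
      + ∫ p, (if p.1 < p.2 then f p.1 * f p.2 else 0) ∂π = (∫ x, f x ∂μ)^2 := by
    rw [← integral_add hint1 hint2]
    have hcongr : ∫ p, ((if p.2 < p.1 then f p.1 * f p.2 else 0)
        + (if p.1 < p.2 then f p.1 * f p.2 else 0)) ∂π = ∫ p, f p.1 * f p.2 ∂π := by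
      apply integral_congr_ae
      filter_upwards [hae] with p hp
      rcases lt_or_gt_of_ne hp with h | h
      · simp [h, not_lt_of_gt h]
      · simp [h, not_lt_of_gt h]
    rw [hcongr, hπ, integral_prod_mul, sq]
  linarith [hswap, hsum]

/-- Conversion of the iterated interval integral to an integral over the product square. -/
lemma toSquare (T : ℝ) (hT : 0 ≤ T) (F : ℝ → ℝ → ℝ)
    (hFm : Measurable (Function.uncurry F)) {C : ℝ} (hC : ∀ t s, s < t → |F t s| ≤ C) :
    ∫ t in (0:ℝ)..T, ∫ s in (0:ℝ)..t, F t s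
      = ∫ p : ℝ × ℝ, (if p.2 < p.1 then F p.1 p.2 else 0)
        ∂((volume.restrict (Ioc (0:ℝ) T)).prod (volume.restrict (Ioc (0:ℝ) T))) := by
  set μ := volume.restrict (Ioc (0:ℝ) T) with hμ
  haveI := finmeas T
  have hGm : Measurable (Function.uncurry fun t s => if s < t then F t s else 0) := by
    apply Measurable.ite (measurableSet_lt measurable_snd measurable_fst) _ measurable_const
    exact hFm.comp (measurable_fst.prodMk measurable_snd)
  have hGint : Integrable (Function.uncurry fun t s => if s < t then F t s else 0) (μ.prod μ) := by
    refine int_of_bdd hGm.aestronglyMeasurable (C := |C|) fun p => ?_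
    by_cases h : p.2 < p.1
    · simp only [Function.uncurry, h, if_true]
      exact (hC p.1 p.2 h).trans (le_abs_self C)
    · simp [Function.uncurry, h, abs_nonneg]
  rw [← MeasureTheory.integral_integral hGint]
  rw [intervalIntegral.integral_of_le hT]
  apply setIntegral_congr_fun measurableSet_Ioc
  intro t ht
  have h1 : ∫ s in (0:ℝ)..t, F t s = ∫ s in Ioo (0:ℝ) t, F t s := by
    rw [intervalIntegral.integral_of_le ht.1.le, integral_Ioc_eq_integral_Ioo]
  have h2 : Iio t ∩ Ioc (0:ℝ) T = Ioo (0:ℝ) t := by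
    ext u
    constructor
    · rintro ⟨hu1, hu2, _⟩; exact ⟨hu2, hu1⟩
    · rintro ⟨hu1, hu2⟩; exact ⟨hu2, hu1, hu2.le.trans ht.2⟩
  have h3 : ∫ s in Iio t, F t s ∂μ = ∫ s in Ioo (0:ℝ) t, F t s := by
    rw [hμ, Measure.restrict_restrict measurableSet_Iio, h2]
  show ∫ s in (0:ℝ)..t, F t s = ∫ s : ℝ, (if s < t then F t s else 0) ∂μ
  rw [h1, ← h3, ← integral_indicator measurableSet_Iio]
  congr 1

lemma finmeas' (a b : ℝ) : IsFiniteMeasure (volume.restrict (Ioc a b)) := by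
  constructor
  rw [Measure.restrict_apply_univ, Real.volume_Ioc]
  exact ENNReal.ofReal_lt_top

noncomputable def Kf (T : ℝ) (φ : ℝ → ℝ) : ℝ → ℝ := fun u =>
  ∫ p : ℝ × ℝ, (if p.2 < p.1 ∧ p.1 - p.2 ≤ u then φ p.1 * φ p.2 else 0)
    ∂((volume.restrict (Ioc (0:ℝ) T)).prod (volume.restrict (Ioc (0:ℝ) T)))

lemma Kf_cond_meas : MeasurableSet {q : ℝ × (ℝ × ℝ) | q.2.2 < q.2.1 ∧ q.2.1 - q.2.2 ≤ q.1} := by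
  apply MeasurableSet.inter
  · exact measurableSet_lt (measurable_snd.comp measurable_snd) (measurable_fst.comp measurable_snd)
  · exact measurableSet_le (((measurable_fst.comp measurable_snd)).sub
      (measurable_snd.comp measurable_snd)) measurable_fst

lemma Kf_integrand_meas (φ : ℝ → ℝ) (hφ : Continuous φ) :
    Measurable (fun q : ℝ × (ℝ × ℝ) =>
      if q.2.2 < q.2.1 ∧ q.2.1 - q.2.2 ≤ q.1 then φ q.2.1 * φ q.2.2 else 0) :=
  Measurable.ite Kf_cond_meas
    (((hφ.measurable.comp (measurable_fst.comp measurable_snd))).mul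
      (hφ.measurable.comp (measurable_snd.comp measurable_snd))) measurable_const

lemma Kf_meas (T : ℝ) (φ : ℝ → ℝ) (hφ : Continuous φ) : Measurable (Kf T φ) := by
  have h := MeasureTheory.StronglyMeasurable.integral_prod_right'
    (ν := (volume.restrict (Ioc (0:ℝ) T)).prod (volume.restrict (Ioc (0:ℝ) T)))
    (f := fun q : ℝ × (ℝ × ℝ) =>
      if q.2.2 < q.2.1 ∧ q.2.1 - q.2.2 ≤ q.1 then φ q.2.1 * φ q.2.2 else 0)
    (Kf_integrand_meas φ hφ).stronglyMeasurable
  exact h.measurable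

lemma Kf_bdd (T : ℝ) (hT : 0 ≤ T) (φ : ℝ → ℝ) (M : ℝ) (hM : ∀ x, |φ x| ≤ M) (u : ℝ) :
    |Kf T φ u| ≤ M * M * (T * T) := by
  haveI := finmeas' 0 T
  have hM0 : 0 ≤ M := (abs_nonneg (φ 0)).trans (hM 0)
  have h1 : ∀ᵐ p : ℝ × ℝ ∂((volume.restrict (Ioc (0:ℝ) T)).prod (volume.restrict (Ioc (0:ℝ) T))),
      ‖if p.2 < p.1 ∧ p.1 - p.2 ≤ u then φ p.1 * φ p.2 else 0‖ ≤ M * M := by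
    apply Eventually.of_forall
    intro p
    by_cases h : p.2 < p.1 ∧ p.1 - p.2 ≤ u
    · rw [if_pos h, Real.norm_eq_abs, abs_mul]
      exact mul_le_mul (hM p.1) (hM p.2) (abs_nonneg _) hM0
    · rw [if_neg h]
      simpa using mul_nonneg hM0 hM0
  have h2 := norm_integral_le_of_norm_le_const h1
  rw [Real.norm_eq_abs] at h2
  refine h2.trans ?_
  rw [← univ_prod_univ, measureReal_def, Measure.prod_prod, Measure.restrict_apply_univ, Real.volume_Ioc,
    ENNReal.toReal_mul, sub_zero, ENNReal.toReal_ofReal hT]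

/-- Positivity of the partial integrals of `K` : the tent-kernel argument. -/
lemma Ppos (T : ℝ) (hT : 0 ≤ T) (φ : ℝ → ℝ) (hφ : Continuous φ) (M : ℝ)
    (hM : ∀ x, |φ x| ≤ M) (a : ℝ) (ha0 : 0 ≤ a) (haT : a ≤ T) :
    0 ≤ ∫ u in Ioo (0:ℝ) a, Kf T φ u := by
  classical
  have hM0 : 0 ≤ M := (abs_nonneg (φ 0)).trans (hM 0)
  set μ := volume.restrict (Ioc (0:ℝ) T) with hμ
  set π := μ.prod μ with hπ
  set σ := volume.restrict (Ioo (0:ℝ) a) with hσ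
  haveI : IsFiniteMeasure μ := finmeas' 0 T
  haveI : IsFiniteMeasure σ := by
    constructor
    rw [hσ, Measure.restrict_apply_univ, Real.volume_Ioo]
    exact ENNReal.ofReal_lt_top
  set χ : ℝ → ℝ → ℝ := fun r x => if r ≤ x ∧ x ≤ r + a then 1 else 0 with hχ
  have hχbd : ∀ r x, |χ r x * φ x| ≤ M := by
    intro r x
    by_cases h : r ≤ x ∧ x ≤ r + a
    · simp only [hχ]
      rw [if_pos h, one_mul]
      exact hM x
    · simp only [hχ]
      rw [if_neg h, zero_mul, abs_zero]
      exact hM0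
  have hχm : ∀ r, Measurable fun x => χ r x * φ x := by
    intro r
    apply Measurable.mul _ hφ.measurable
    exact Measurable.ite
      ((measurableSet_le measurable_const measurable_id).inter
        (measurableSet_le measurable_id measurable_const)) measurable_const measurable_const
  -- swap the u–integral inside
  have hswapK : ∫ u in Ioo (0:ℝ) a, Kf T φ u
      = ∫ p : ℝ × ℝ, (∫ u, (if p.2 < p.1 ∧ p.1 - p.2 ≤ u then φ p.1 * φ p.2 else 0) ∂σ) ∂π := by
    have hint : Integrable (Function.uncurry fun (u : ℝ) (p : ℝ × ℝ) =>
        if p.2 < p.1 ∧ p.1 - p.2 ≤ u then φ p.1 * φ p.2 else 0) (σ.prod π) := by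
      refine int_of_bdd ((Kf_integrand_meas φ hφ).aestronglyMeasurable) (C := M * M) ?_
      intro q
      by_cases h : q.2.2 < q.2.1 ∧ q.2.1 - q.2.2 ≤ q.1
      · have : Function.uncurry (fun (u : ℝ) (p : ℝ × ℝ) =>
            if p.2 < p.1 ∧ p.1 - p.2 ≤ u then φ p.1 * φ p.2 else 0) q = φ q.2.1 * φ q.2.2 :=
          if_pos h
        rw [this, abs_mul]
        exact mul_le_mul (hM _) (hM _) (abs_nonneg _) hM0
      · have : Function.uncurry (fun (u : ℝ) (p : ℝ × ℝ) =>
            if p.2 < p.1 ∧ p.1 - p.2 ≤ u then φ p.1 * φ p.2 else 0) q = 0 :=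
          if_neg h
        rw [this, abs_zero]
        exact mul_nonneg hM0 hM0
    exact integral_integral_swap hint
  have hinner : ∀ p : ℝ × ℝ, (∫ u, (if p.2 < p.1 ∧ p.1 - p.2 ≤ u then φ p.1 * φ p.2 else 0) ∂σ)
      = if p.2 < p.1 then max (a - (p.1 - p.2)) 0 * (φ p.1 * φ p.2) else 0 := by
    intro p
    by_cases h : p.2 < p.1
    · have hx : 0 < p.1 - p.2 := sub_pos.2 h
      have e1 : (fun u => if p.2 < p.1 ∧ p.1 - p.2 ≤ u then φ p.1 * φ p.2 else 0)
          = (Ici (p.1 - p.2)).indicator (fun _ => φ p.1 * φ p.2) := by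
        funext u
        by_cases hu : p.1 - p.2 ≤ u
        · rw [if_pos ⟨h, hu⟩, indicator_of_mem (mem_Ici.2 hu)]
        · rw [if_neg (fun hc => hu hc.2), indicator_of_notMem (fun hc => hu (mem_Ici.1 hc))]
      rw [e1, integral_indicator measurableSet_Ici, setIntegral_const]
      have e2 : σ (Ici (p.1 - p.2)) = ENNReal.ofReal (a - (p.1 - p.2)) := by
        rw [hσ, Measure.restrict_apply' measurableSet_Ioo]
        have e3 : Ici (p.1 - p.2) ∩ Ioo 0 a = Ico (p.1 - p.2) a := by
          ext u
          constructor
          · rintro ⟨h1, _, h3⟩; exact ⟨h1, h3⟩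
          · rintro ⟨h1, h2⟩; exact ⟨h1, hx.trans_le h1, h2⟩
        rw [e3, Real.volume_Ico]
      rw [measureReal_def, e2, if_pos h, ENNReal.toReal_ofReal', smul_eq_mul]
    · rw [if_neg h]
      have : (fun u => if p.2 < p.1 ∧ p.1 - p.2 ≤ u then φ p.1 * φ p.2 else 0)
          = fun _ => (0:ℝ) := by
        funext u; exact if_neg (fun hc => h hc.1)
      rw [this, integral_const, smul_zero]
  rw [hswapK, integral_congr_ae (Eventually.of_forall hinner)]
  -- the tent identity
  have hmemae : ∀ᵐ p : ℝ × ℝ ∂π, p ∈ Ioc (0:ℝ) T ×ˢ Ioc (0:ℝ) T := by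
    rw [hπ, hμ, Measure.prod_restrict]
    exact ae_restrict_mem (measurableSet_Ioc.prod measurableSet_Ioc)
  have htent : ∀ p : ℝ × ℝ, p ∈ Ioc (0:ℝ) T ×ˢ Ioc (0:ℝ) T →
      (if p.2 < p.1 then max (a - (p.1 - p.2)) 0 * (φ p.1 * φ p.2) else 0)
      = ∫ r in Icc (-a) T, (if p.2 < p.1 then (χ r p.1 * φ p.1) * (χ r p.2 * φ p.2) else 0) := by
    intro p hp
    by_cases h : p.2 < p.1
    · simp only [if_pos h]
      have e2 : ∀ r, (χ r p.1 * φ p.1) * (χ r p.2 * φ p.2)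
          = (Icc (p.1 - a) p.2).indicator (fun _ => (1:ℝ)) r * (φ p.1 * φ p.2) := by
        intro r
        have key : χ r p.1 * χ r p.2 = (Icc (p.1 - a) p.2).indicator (fun _ => (1:ℝ)) r := by
          by_cases hmem : p.1 - a ≤ r ∧ r ≤ p.2
          · have h1 : r ≤ p.1 ∧ p.1 ≤ r + a := ⟨hmem.2.trans h.le, by linarith [hmem.1]⟩
            have h2 : r ≤ p.2 ∧ p.2 ≤ r + a := ⟨hmem.2, by linarith [hmem.1, h.le]⟩
            simp only [hχ]
            rw [if_pos h1, if_pos h2, indicator_of_mem (mem_Icc.2 hmem), one_mul]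
          · rw [indicator_of_notMem (fun hc => hmem (mem_Icc.1 hc))]
            rcases not_and_or.1 hmem with hr | hr
            · push_neg at hr
              have : ¬(r ≤ p.1 ∧ p.1 ≤ r + a) := fun hc => by linarith [hc.2]
              simp only [hχ]
              rw [if_neg this, zero_mul]
            · push_neg at hr
              have : ¬(r ≤ p.2 ∧ p.2 ≤ r + a) := fun hc => by linarith [hc.1]
              simp only [hχ]
              rw [if_neg this, mul_zero]
        calc (χ r p.1 * φ p.1) * (χ r p.2 * φ p.2)
            = (χ r p.1 * χ r p.2) * (φ p.1 * φ p.2) := by ring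
          _ = (Icc (p.1 - a) p.2).indicator (fun _ => (1:ℝ)) r * (φ p.1 * φ p.2) := by rw [key]
      have e3 : ∫ r in Icc (-a) T, (χ r p.1 * φ p.1) * (χ r p.2 * φ p.2)
          = (∫ r in Icc (-a) T, (Icc (p.1 - a) p.2).indicator (fun _ => (1:ℝ)) r)
              * (φ p.1 * φ p.2) := by
        rw [← integral_mul_const]
        exact integral_congr_ae (Eventually.of_forall fun r => e2 r)
      rw [e3]
      congr 1
      rw [integral_indicator measurableSet_Icc, Measure.restrict_restrict measurableSet_Icc]
      have hsub : Icc (p.1 - a) p.2 ∩ Icc (-a) T = Icc (p.1 - a) p.2 := by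
        apply inter_eq_self_of_subset_left
        apply Icc_subset_Icc
        · have := hp.1.1; linarith
        · exact hp.2.2
      rw [hsub, setIntegral_const, measureReal_def, Real.volume_Icc, ENNReal.toReal_ofReal', smul_eq_mul, mul_one]
      have : p.2 - (p.1 - a) = a - (p.1 - p.2) := by ring
      rw [this]
    · simp only [if_neg h, integral_const, smul_zero]
  rw [integral_congr_ae (hmemae.mono htent)]
  -- now swap the r integral out
  have hswapR : ∫ p : ℝ × ℝ,
      (∫ r in Icc (-a) T, (if p.2 < p.1 then (χ r p.1 * φ p.1) * (χ r p.2 * φ p.2) else 0)) ∂π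
      = ∫ r in Icc (-a) T,
        (∫ p : ℝ × ℝ, (if p.2 < p.1 then (χ r p.1 * φ p.1) * (χ r p.2 * φ p.2) else 0) ∂π) := by
    have hm : Measurable (Function.uncurry fun (p : ℝ × ℝ) (r : ℝ) =>
        if p.2 < p.1 then (χ r p.1 * φ p.1) * (χ r p.2 * φ p.2) else 0) := by
      apply Measurable.ite
      · exact measurableSet_lt (measurable_snd.comp measurable_fst)
          (measurable_fst.comp measurable_fst)
      · simp only [hχ]
        apply Measurable.mul
        · apply Measurable.mul _ (hφ.measurable.comp (measurable_fst.comp measurable_fst))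
          exact Measurable.ite
            ((measurableSet_le measurable_snd (measurable_fst.comp measurable_fst)).inter
              (measurableSet_le (measurable_fst.comp measurable_fst)
                (measurable_snd.add measurable_const))) measurable_const measurable_const
        · apply Measurable.mul _ (hφ.measurable.comp (measurable_snd.comp measurable_fst))
          exact Measurable.ite
            ((measurableSet_le measurable_snd (measurable_snd.comp measurable_fst)).inter
              (measurableSet_le (measurable_snd.comp measurable_fst)
                (measurable_snd.add measurable_const))) measurable_const measurable_const
      · exact measurable_const
    have hint : Integrable (Function.uncurry fun (p : ℝ × ℝ) (r : ℝ) =>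
        if p.2 < p.1 then (χ r p.1 * φ p.1) * (χ r p.2 * φ p.2) else 0)
        (π.prod (volume.restrict (Icc (-a) T))) := by
      haveI : IsFiniteMeasure (volume.restrict (Icc (-a) T)) := by
        constructor
        rw [Measure.restrict_apply_univ, Real.volume_Icc]
        exact ENNReal.ofReal_lt_top
      refine int_of_bdd hm.aestronglyMeasurable (C := M * M) ?_
      rintro ⟨p, r⟩
      by_cases h : p.2 < p.1
      · have : Function.uncurry (fun (p : ℝ × ℝ) (r : ℝ) =>
            if p.2 < p.1 then (χ r p.1 * φ p.1) * (χ r p.2 * φ p.2) else 0) (p, r)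
            = (χ r p.1 * φ p.1) * (χ r p.2 * φ p.2) := if_pos h
        rw [this, abs_mul]
        exact mul_le_mul (hχbd r p.1) (hχbd r p.2) (abs_nonneg _) hM0
      · have : Function.uncurry (fun (p : ℝ × ℝ) (r : ℝ) =>
            if p.2 < p.1 then (χ r p.1 * φ p.1) * (χ r p.2 * φ p.2) else 0) (p, r)
            = 0 := if_neg h
        rw [this, abs_zero]
        exact mul_nonneg hM0 hM0
    exact integral_integral_swap hint
  rw [hswapR]
  apply setIntegral_nonneg measurableSet_Icc
  intro r _
  have htri := tri T (fun x => χ r x * φ x) (hχm r)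
    (int_of_bdd (hχm r).aestronglyMeasurable (fun x => hχbd r x))
  rw [← hμ, ← hπ] at htri
  rw [htri]
  positivity

theorem aux (T : ℝ) (hT : 0 < T) (ξ φ : ℝ → ℝ) (M : ℝ)
    (hanti : Antitone ξ) (hnn : ∀ x, 0 ≤ ξ x) (hconv : ConvexOn ℝ (Icc 0 T) ξ)
    (hφ : Continuous φ) (hM : ∀ x, |φ x| ≤ M) :
    0 ≤ ∫ t in (0:ℝ)..T, ∫ s in (0:ℝ)..t, ξ (t - s) * φ t * φ s := by
  classical
  have hM0 : 0 ≤ M := (abs_nonneg (φ 0)).trans (hM 0)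
  set μ := volume.restrict (Ioc (0:ℝ) T) with hμ
  set π := μ.prod μ with hπ
  haveI : IsFiniteMeasure μ := finmeas' 0 T
  -- Step 1 : write the double integral over the product square
  have hFm : Measurable (Function.uncurry fun t s => ξ (t - s) * φ t * φ s) := by
    have e : Function.uncurry (fun t s => ξ (t - s) * φ t * φ s)
        = fun p : ℝ × ℝ => ξ (p.1 - p.2) * φ p.1 * φ p.2 := rfl
    rw [e]
    exact ((hanti.measurable.comp (measurable_fst.sub measurable_snd)).mul
      (hφ.measurable.comp measurable_fst)).mul (hφ.measurable.comp measurable_snd)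
  have hbound : ∀ t s : ℝ, s < t → |ξ (t - s) * φ t * φ s| ≤ ξ 0 * M * M := by
    intro t s h
    rw [abs_mul, abs_mul]
    have h1 : |ξ (t - s)| ≤ ξ 0 := by
      rw [abs_of_nonneg (hnn _)]
      exact hanti (by linarith)
    exact mul_le_mul (mul_le_mul h1 (hM t) (abs_nonneg _) (hnn 0)) (hM s) (abs_nonneg _)
      (mul_nonneg (hnn 0) hM0)
  have step1 := toSquare T hT.le (fun t s => ξ (t - s) * φ t * φ s) hFm hbound
  rw [← hμ, ← hπ] at step1
  -- derivative data
  set g : ℝ → ℝ := fun u => -(rd ξ T u) with hg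
  have hg0 : ∀ u, 0 ≤ g u := fun u => neg_nonneg.2 (rd_nonpos hanti u)
  have hganti : AntitoneOn g (Ioc 0 T) := fun u hu v hv huv =>
    neg_le_neg (rd_mono hanti hconv u v hu.1 huv hv.2)
  have hgint : Integrable g μ := (rd_integrableOn hT hanti hconv).neg
  have hgIoc : ∀ x ∈ Ioo (0:ℝ) T, ∫ u in Ioc x T, g u = ξ x - ξ T := by
    intro x hx
    have h1 : ∫ u in Ioc x T, g u = ∫ u in x..T, g u :=
      (intervalIntegral.integral_of_le hx.2.le).symm
    have h2 : ∫ u in x..T, g u = -(∫ u in x..T, rd ξ T u) := by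
      rw [hg, intervalIntegral.integral_neg]
    rw [h1, h2, rd_ftc hanti hconv hx.1 hx.2.le]
    ring
  -- the tail integral Ĝ
  set G : ℝ → ℝ := fun x => ∫ u, (Ici x).indicator g u ∂μ with hG
  have hGanti : Antitone G := by
    intro x y hxy
    apply integral_mono (hgint.indicator measurableSet_Ici) (hgint.indicator measurableSet_Ici)
    intro u
    exact Set.indicator_le_indicator_of_subset (Ici_subset_Ici.2 hxy) hg0 u
  have hGm : Measurable G := hGanti.measurable
  have hGnn : ∀ x, 0 ≤ G x := fun x =>
    integral_nonneg (fun u => indicator_nonneg (fun v _ => hg0 v) u)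
  set CG : ℝ := ∫ u, g u ∂μ with hCG
  have hCG0 : 0 ≤ CG := integral_nonneg (fun u => hg0 u)
  have hGbd : ∀ x, |G x| ≤ CG := by
    intro x
    rw [abs_of_nonneg (hGnn x)]
    exact integral_mono (hgint.indicator measurableSet_Ici) hgint
      (indicator_le_self' (fun u _ => hg0 u))
  have hGval : ∀ x ∈ Ioo (0:ℝ) T, G x = ξ x - ξ T := by
    intro x hx
    have e0 : G x = ∫ u in Ici x, g u ∂μ := by
      simp only [hG]
      rw [integral_indicator measurableSet_Ici]
    rw [e0, hμ, Measure.restrict_restrict measurableSet_Ici]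
    have e1 : Ici x ∩ Ioc 0 T = Icc x T := by
      ext u
      constructor
      · rintro ⟨h1, _, h3⟩; exact ⟨h1, h3⟩
      · rintro ⟨h1, h2⟩; exact ⟨h1, hx.1.trans_le h1, h2⟩
    rw [e1, integral_Icc_eq_integral_Ioc]
    exact hgIoc x hx
  have hmemae : ∀ᵐ p : ℝ × ℝ ∂π, p ∈ Ioc (0:ℝ) T ×ˢ Ioc (0:ℝ) T := by
    rw [hπ, hμ, Measure.prod_restrict]
    exact ae_restrict_mem (measurableSet_Ioc.prod measurableSet_Ioc)
  -- Step 2 : decompose the kernel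
  have hrep : ∀ᵐ p : ℝ × ℝ ∂π, (if p.2 < p.1 then ξ (p.1 - p.2) * φ p.1 * φ p.2 else 0)
      = (if p.2 < p.1 then ξ T * φ p.1 * φ p.2 else 0)
        + (if p.2 < p.1 then G (p.1 - p.2) * φ p.1 * φ p.2 else 0) := by
    filter_upwards [hmemae] with p hp
    by_cases h : p.2 < p.1
    · rw [if_pos h, if_pos h, if_pos h]
      have hx : p.1 - p.2 ∈ Ioo (0:ℝ) T := by
        constructor
        · exact sub_pos.2 h
        · have h1 := hp.1.2
          have h2 := hp.2.1
          linarith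
      have := hGval _ hx
      rw [this]
      ring
    · rw [if_neg h, if_neg h, if_neg h]
      ring
  have int1 : Integrable (fun p : ℝ × ℝ => if p.2 < p.1 then ξ T * φ p.1 * φ p.2 else 0) π := by
    refine int_of_bdd ?_ (C := ξ 0 * M * M) ?_
    · apply Measurable.aestronglyMeasurable
      exact Measurable.ite (measurableSet_lt measurable_snd measurable_fst)
        ((measurable_const.mul (hφ.measurable.comp measurable_fst)).mul
          (hφ.measurable.comp measurable_snd)) measurable_const
    · intro p
      by_cases h : p.2 < p.1
      · rw [if_pos h, abs_mul, abs_mul]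
        have h1 : |ξ T| ≤ ξ 0 := by rw [abs_of_nonneg (hnn T)]; exact hanti hT.le
        exact mul_le_mul (mul_le_mul h1 (hM p.1) (abs_nonneg _) (hnn 0)) (hM p.2)
          (abs_nonneg _) (mul_nonneg (hnn 0) hM0)
      · rw [if_neg h, abs_zero]
        exact mul_nonneg (mul_nonneg (hnn 0) hM0) hM0
  have int2 : Integrable
      (fun p : ℝ × ℝ => if p.2 < p.1 then G (p.1 - p.2) * φ p.1 * φ p.2 else 0) π := by
    refine int_of_bdd ?_ (C := CG * M * M) ?_
    · apply Measurable.aestronglyMeasurable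
      exact Measurable.ite (measurableSet_lt measurable_snd measurable_fst)
        (((hGm.comp (measurable_fst.sub measurable_snd)).mul
          (hφ.measurable.comp measurable_fst)).mul
          (hφ.measurable.comp measurable_snd)) measurable_const
    · intro p
      by_cases h : p.2 < p.1
      · rw [if_pos h, abs_mul, abs_mul]
        exact mul_le_mul (mul_le_mul (hGbd _) (hM p.1) (abs_nonneg _) hCG0) (hM p.2)
          (abs_nonneg _) (mul_nonneg hCG0 hM0)
      · rw [if_neg h, abs_zero]
        exact mul_nonneg (mul_nonneg hCG0 hM0) hM0
  -- value of the first term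
  have hφint : Integrable φ μ := int_of_bdd hφ.measurable.aestronglyMeasurable hM
  have term1 : (∫ p : ℝ × ℝ, (if p.2 < p.1 then ξ T * φ p.1 * φ p.2 else 0) ∂π)
      = ξ T * ((∫ x, φ x ∂μ) ^ 2 / 2) := by
    have e : (fun p : ℝ × ℝ => if p.2 < p.1 then ξ T * φ p.1 * φ p.2 else 0)
        = fun p : ℝ × ℝ => ξ T * (if p.2 < p.1 then φ p.1 * φ p.2 else 0) := by
      funext p
      by_cases h : p.2 < p.1
      · rw [if_pos h, if_pos h]; ring
      · rw [if_neg h, if_neg h, mul_zero]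
    rw [e, integral_const_mul]
    have htri := tri T φ hφ.measurable hφint
    rw [← hμ, ← hπ] at htri
    rw [htri]
  have term1nn : 0 ≤ ξ T * ((∫ x, φ x ∂μ) ^ 2 / 2) := by
    apply mul_nonneg (hnn T)
    positivity
  -- measurable version of g
  have hgaem : AEMeasurable g μ := by
    rw [hμ]
    exact aemeasurable_restrict_of_antitoneOn measurableSet_Ioc hganti
  obtain ⟨g₀, hg₀m, hgg₀⟩ : ∃ g₀ : ℝ → ℝ, Measurable g₀ ∧ g =ᵐ[μ] g₀ :=
    ⟨hgaem.mk g, hgaem.measurable_mk, hgaem.ae_eq_mk⟩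
  have hg₀int : Integrable g₀ μ := hgint.congr hgg₀
  obtain ⟨N, hNsub, hNm, hN0⟩ := exists_measurable_superset_of_null (ae_iff.1 hgg₀)
  -- Step 3 : Fubini for the remainder term
  set H : ℝ × (ℝ × ℝ) → ℝ := fun q =>
    if q.2.2 < q.2.1 ∧ q.2.1 - q.2.2 ≤ q.1 then g q.1 * (φ q.2.1 * φ q.2.2) else 0 with hH
  set H₀ : ℝ × (ℝ × ℝ) → ℝ := fun q =>
    if q.2.2 < q.2.1 ∧ q.2.1 - q.2.2 ≤ q.1 then g₀ q.1 * (φ q.2.1 * φ q.2.2) else 0 with hH₀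
  have hH₀m : Measurable H₀ :=
    Measurable.ite Kf_cond_meas ((hg₀m.comp measurable_fst).mul
      ((hφ.measurable.comp (measurable_fst.comp measurable_snd)).mul
        (hφ.measurable.comp (measurable_snd.comp measurable_snd)))) measurable_const
  have hHae : H =ᵐ[μ.prod π] H₀ := by
    rw [Filter.eventuallyEq_iff_exists_mem]
    refine ⟨{q : ℝ × (ℝ × ℝ) | g q.1 = g₀ q.1}, ?_, ?_⟩
    · rw [mem_ae_iff]
      apply measure_mono_null (t := N ×ˢ (univ : Set (ℝ × ℝ)))
      · intro q hq
        exact ⟨hNsub hq, mem_univ _⟩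
      · rw [Measure.prod_prod, hN0, zero_mul]
    · intro q hq
      have hq' : g q.1 = g₀ q.1 := hq
      simp only [hH, hH₀, hq']
  have hHint : Integrable H (μ.prod π) := by
    have hdom : Integrable (fun q : ℝ × (ℝ × ℝ) => |g₀ q.1| * (M * M)) (μ.prod π) :=
      hg₀int.abs.mul_prod (integrable_const (M * M))
    have hH₀int : Integrable H₀ (μ.prod π) := by
      refine hdom.mono' hH₀m.aestronglyMeasurable (Eventually.of_forall fun q => ?_)
      rw [Real.norm_eq_abs]
      by_cases h : q.2.2 < q.2.1 ∧ q.2.1 - q.2.2 ≤ q.1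
      · simp only [hH₀]
        rw [if_pos h, abs_mul]
        apply mul_le_mul_of_nonneg_left _ (abs_nonneg _)
        rw [abs_mul]
        exact mul_le_mul (hM _) (hM _) (abs_nonneg _) hM0
      · simp only [hH₀]
        rw [if_neg h, abs_zero]
        positivity
    exact hH₀int.congr hHae.symm
  have hswap1 := integral_integral_swap (f := fun u p => H (u, p)) hHint
  have hL : ∀ u, (∫ p, H (u, p) ∂π) = g u * Kf T φ u := by
    intro u
    have e : (fun p : ℝ × ℝ => H (u, p))
        = fun p : ℝ × ℝ => g u * (if p.2 < p.1 ∧ p.1 - p.2 ≤ u then φ p.1 * φ p.2 else 0) := by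
      funext p
      simp only [hH]
      by_cases h : p.2 < p.1 ∧ p.1 - p.2 ≤ u
      · rw [if_pos h, if_pos h]
      · rw [if_neg h, if_neg h, mul_zero]
    rw [e, integral_const_mul]
    rfl
  have hR : ∀ p : ℝ × ℝ, (∫ u, H (u, p) ∂μ)
      = (if p.2 < p.1 then G (p.1 - p.2) * φ p.1 * φ p.2 else 0) := by
    intro p
    by_cases h : p.2 < p.1
    · have e : (fun u => H (u, p))
          = fun u => ((Ici (p.1 - p.2)).indicator g u) * (φ p.1 * φ p.2) := by
        funext u
        simp only [hH]
        by_cases hu : p.1 - p.2 ≤ u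
        · rw [if_pos ⟨h, hu⟩, indicator_of_mem (mem_Ici.2 hu)]
        · rw [if_neg (fun hc => hu hc.2), indicator_of_notMem (fun hc => hu (mem_Ici.1 hc)),
            zero_mul]
      rw [e, integral_mul_const, if_pos h]
      have e2 : G (p.1 - p.2) = ∫ u, (Ici (p.1 - p.2)).indicator g u ∂μ := rfl
      rw [e2, mul_assoc]
    · have e : (fun u => H (u, p)) = fun _ => (0:ℝ) := by
        funext u
        exact if_neg (fun hc => h hc.1)
      rw [if_neg h, e]
      simp
  have step3 : (∫ p : ℝ × ℝ, (if p.2 < p.1 then G (p.1 - p.2) * φ p.1 * φ p.2 else 0) ∂π)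
      = ∫ u, g u * Kf T φ u ∂μ := by
    calc (∫ p : ℝ × ℝ, (if p.2 < p.1 then G (p.1 - p.2) * φ p.1 * φ p.2 else 0) ∂π)
        = ∫ p : ℝ × ℝ, (∫ u, H (u, p) ∂μ) ∂π :=
          (integral_congr_ae (Eventually.of_forall fun p => (hR p).symm))
      _ = ∫ u, (∫ p, H (u, p) ∂π) ∂μ := hswap1.symm
      _ = ∫ u, g u * Kf T φ u ∂μ :=
          integral_congr_ae (Eventually.of_forall fun u => hL u)
  -- Step 4 : layer cake and positivity
  have hlayer : 0 ≤ ∫ u, g u * Kf T φ u ∂μ := by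
    set ν := volume.restrict (Ioi (0:ℝ)) with hν
    set W : ℝ × ℝ → ℝ := fun q => if q.2 < g₀ q.1 then Kf T φ q.1 else 0 with hW
    have hSm : MeasurableSet {q : ℝ × ℝ | q.2 < g₀ q.1} :=
      measurableSet_lt measurable_snd (hg₀m.comp measurable_fst)
    have hWm : Measurable W :=
      Measurable.ite hSm ((Kf_meas T φ hφ).comp measurable_fst) measurable_const
    have hνIio : ∀ c : ℝ, ν (Iio c) = ENNReal.ofReal c := by
      intro c
      rw [hν, Measure.restrict_apply' measurableSet_Ioi]
      have e : Iio c ∩ Ioi 0 = Ioo 0 c := by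
        ext u
        constructor
        · rintro ⟨h1, h2⟩; exact ⟨h2, h1⟩
        · rintro ⟨h1, h2⟩; exact ⟨h2, h1⟩
      rw [e, Real.volume_Ioo, sub_zero]
    have hregion : (μ.prod ν) {q : ℝ × ℝ | q.2 < g₀ q.1}
        = ∫⁻ u, ENNReal.ofReal (g₀ u) ∂μ := by
      rw [Measure.prod_apply hSm]
      apply lintegral_congr
      intro u
      have e : (Prod.mk u ⁻¹' {q : ℝ × ℝ | q.2 < g₀ q.1}) = Iio (g₀ u) := rfl
      rw [e, hνIio]
    have hfin : (μ.prod ν) {q : ℝ × ℝ | q.2 < g₀ q.1} < ⊤ := by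
      rw [hregion]
      have e : ∫⁻ u, ENNReal.ofReal (g₀ u) ∂μ = ∫⁻ u, ENNReal.ofReal (g u) ∂μ :=
        lintegral_congr_ae (hgg₀.mono fun u hu => by simp only [hu])
      rw [e]
      exact hgint.lintegral_lt_top
    have hWint : Integrable W (μ.prod ν) := by
      have hdom : Integrable
          ({q : ℝ × ℝ | q.2 < g₀ q.1}.indicator (fun _ => M * M * (T * T))) (μ.prod ν) := by
        rw [integrable_indicator_iff hSm]
        exact integrableOn_const hfin.ne
      refine hdom.mono' hWm.aestronglyMeasurable (Eventually.of_forall fun q => ?_)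
      rw [Real.norm_eq_abs]
      by_cases h : q.2 < g₀ q.1
      · simp only [hW]
        rw [if_pos h, indicator_of_mem (show q ∈ {q : ℝ × ℝ | q.2 < g₀ q.1} from h)]
        exact Kf_bdd T hT.le φ M hM q.1
      · simp only [hW]
        rw [if_neg h, indicator_of_notMem (show q ∉ {q : ℝ × ℝ | q.2 < g₀ q.1} from h), abs_zero]
    have hswap2 := integral_integral_swap (f := fun u lam => W (u, lam)) hWint
    have hL2 : ∀ᵐ u ∂μ, (∫ lam, W (u, lam) ∂ν) = g u * Kf T φ u := by
      filter_upwards [hgg₀] with u hu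
      have e : (fun lam => W (u, lam)) = (Iio (g₀ u)).indicator (fun _ => Kf T φ u) := by
        funext lam
        simp only [hW]
        by_cases h : lam < g₀ u
        · rw [if_pos h, indicator_of_mem (mem_Iio.2 h)]
        · rw [if_neg h, indicator_of_notMem (fun hc => h (mem_Iio.1 hc))]
      rw [e, integral_indicator measurableSet_Iio, setIntegral_const, measureReal_def, hνIio,
        ENNReal.toReal_ofReal (hu ▸ hg0 u), smul_eq_mul, hu]
    have key : ∀ lam : ℝ, 0 ≤ ∫ u, W (u, lam) ∂μ := by
      intro lam
      have e : (fun u => W (u, lam)) = {u : ℝ | lam < g₀ u}.indicator (Kf T φ) := by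
        funext u
        simp only [hW]
        by_cases h : lam < g₀ u
        · rw [if_pos h, indicator_of_mem (show u ∈ {u : ℝ | lam < g₀ u} from h)]
        · rw [if_neg h, indicator_of_notMem (show u ∉ {u : ℝ | lam < g₀ u} from h)]
      have hAm : MeasurableSet {u : ℝ | lam < g₀ u} := hg₀m measurableSet_Ioi
      rw [e, integral_indicator hAm, hμ, Measure.restrict_restrict hAm]
      set S : Set ℝ := {u | u ∈ Ioc (0:ℝ) T ∧ lam < g u ∧ g u = g₀ u} with hS
      have hbddS : BddAbove ({(0:ℝ)} ∪ S) := by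
        refine ⟨T, ?_⟩
        rintro u (hu0 | huS)
        · rw [mem_singleton_iff.1 hu0]; exact hT.le
        · exact huS.1.2
      set c := sSup ({(0:ℝ)} ∪ S) with hc
      have hc0 : 0 ≤ c := le_csSup hbddS (mem_union_left _ (mem_singleton 0))
      have hcT : c ≤ T := by
        have h1 : sSup ({(0:ℝ)} ∪ S) ≤ T := by
          apply csSup_le ⟨0, mem_union_left _ (mem_singleton 0)⟩
          rintro u (hu0 | huS)
          · rw [mem_singleton_iff.1 hu0]; exact hT.le
          · exact huS.1.2
        rw [hc]; exact h1
      have htnull : volume ({u : ℝ | ¬ g u = g₀ u} ∩ Ioc 0 T) = 0 := by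
        have h0 := ae_iff.1 hgg₀
        rwa [hμ, Measure.restrict_apply' measurableSet_Ioc] at h0
      have haeq : ({u : ℝ | lam < g₀ u} ∩ Ioc 0 T : Set ℝ) =ᵐ[volume] Ioo 0 c := by
        rw [MeasureTheory.ae_eq_set]
        constructor
        · refine measure_mono_null ?_ (measure_union_null htnull (measure_singleton c))
          · rintro u ⟨⟨hA, hI⟩, hn⟩
            by_cases hgu : g u = g₀ u
            · right
              have huS : u ∈ S := ⟨hI, by rw [hgu]; exact hA, hgu⟩
              have huc : u ≤ c := le_csSup hbddS (mem_union_right _ huS)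
              have hnlt : ¬ u < c := fun hlt => hn ⟨hI.1, hlt⟩
              exact mem_singleton_iff.2 (le_antisymm huc (not_lt.1 hnlt))
            · left; exact ⟨hgu, hI⟩
        · refine measure_mono_null ?_ htnull
          · rintro u ⟨hu, hn⟩
            have huI : u ∈ Ioc (0:ℝ) T := ⟨hu.1, hu.2.le.trans hcT⟩
            by_cases hgu : g u = g₀ u
            · exfalso
              have hu2 : u < sSup ({(0:ℝ)} ∪ S) := by rw [← hc]; exact hu.2
              obtain ⟨v, hv, huv⟩ := exists_lt_of_lt_csSup ⟨0, mem_union_left _ (mem_singleton 0)⟩ hu2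
              rcases hv with hv0 | hvS
              · rw [mem_singleton_iff.1 hv0] at huv
                exact absurd huv (not_lt.2 hu.1.le)
              · have hgv : lam < g v := hvS.2.1
                have hle : g v ≤ g u := hganti huI hvS.1 huv.le
                exact hn ⟨show lam < g₀ u from hgu ▸ lt_of_lt_of_le hgv hle, huI⟩
            · exact ⟨hgu, huI⟩
      rw [setIntegral_congr_set haeq]
      exact Ppos T hT.le φ hφ M hM c hc0 hcT
    calc (0:ℝ) ≤ ∫ lam, (∫ u, W (u, lam) ∂μ) ∂ν := by
          rw [hν]
          exact setIntegral_nonneg measurableSet_Ioi (fun lam _ => key lam)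
      _ = ∫ u, (∫ lam, W (u, lam) ∂ν) ∂μ := hswap2.symm
      _ = ∫ u, g u * Kf T φ u ∂μ := integral_congr_ae hL2
  -- assemble
  rw [step1, integral_congr_ae hrep, integral_add int1 int2, term1, step3]
  exact add_nonneg term1nn hlayer

end PosTypeKernel

/-- A nonnegative, nonincreasing, convex kernel `ξ` on `[0,T]` is of positive type:
for every continuous `φ` on `[0,T]`,
`∫₀ᵀ ∫₀ᵗ ξ(t-s) φ(t) φ(s) ds dt ≥ 0`. -/
theorem convex_monotone_kernel_positive_type (T : ℝ) (hT : 0 ≤ T) (ξ : ℝ → ℝ)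
    (hnn : ∀ t ∈ Set.Icc (0:ℝ) T, 0 ≤ ξ t)
    (hanti : AntitoneOn ξ (Set.Icc 0 T))
    (hconv : ConvexOn ℝ (Set.Icc 0 T) ξ)
    (φ : ℝ → ℝ) (hφ : ContinuousOn φ (Set.Icc 0 T)) :
    0 ≤ ∫ t in (0:ℝ)..T, ∫ s in (0:ℝ)..t, ξ (t - s) * φ t * φ s := by
  rcases eq_or_lt_of_le hT with rfl | hT0
  · simp
  set c : ℝ → ℝ := fun x => max 0 (min x T) with hc
  have hcmem : ∀ x, c x ∈ Set.Icc (0:ℝ) T := fun x =>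
    ⟨le_max_left _ _, max_le hT (min_le_right x T)⟩
  have hceq : ∀ x ∈ Set.Icc (0:ℝ) T, c x = x := by
    intro x hx
    simp only [hc]
    rw [min_eq_left hx.2, max_eq_right hx.1]
  have hcmono : Monotone c := fun a b hab => max_le_max le_rfl (min_le_min hab le_rfl)
  set ξ' : ℝ → ℝ := fun x => ξ (c x) with hξ'
  set φ' : ℝ → ℝ := fun x => φ (c x) with hφ'
  have hξ'anti : Antitone ξ' := fun a b hab => hanti (hcmem a) (hcmem b) (hcmono hab)
  have hξ'nn : ∀ x, 0 ≤ ξ' x := fun x => hnn _ (hcmem x)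
  have hξ'conv : ConvexOn ℝ (Set.Icc 0 T) ξ' := by
    refine ⟨convex_Icc 0 T, ?_⟩
    intro x hx y hy a b ha hb hab
    have hmem : a • x + b • y ∈ Set.Icc (0:ℝ) T := (convex_Icc 0 T) hx hy ha hb hab
    have e1 : ξ' (a • x + b • y) = ξ (a • x + b • y) := by
      simp only [hξ']; rw [hceq _ hmem]
    have e2 : ξ' x = ξ x := by simp only [hξ']; rw [hceq _ hx]
    have e3 : ξ' y = ξ y := by simp only [hξ']; rw [hceq _ hy]
    rw [e1, e2, e3]
    exact hconv.2 hx hy ha hb hab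
  have hccont : Continuous c := continuous_const.max (continuous_id.min continuous_const)
  have hφ'cont : Continuous φ' := hφ.comp_continuous hccont hcmem
  obtain ⟨M, hMb⟩ := (isCompact_Icc (a := (0:ℝ)) (b := T)).exists_bound_of_continuousOn hφ
  have hM : ∀ x, |φ' x| ≤ M := by
    intro x
    have h := hMb (c x) (hcmem x)
    rwa [Real.norm_eq_abs] at h
  have heq : ∫ t in (0:ℝ)..T, ∫ s in (0:ℝ)..t, ξ (t - s) * φ t * φ s
      = ∫ t in (0:ℝ)..T, ∫ s in (0:ℝ)..t, ξ' (t - s) * φ' t * φ' s := by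
    apply intervalIntegral.integral_congr
    intro t ht
    rw [Set.uIcc_of_le hT] at ht
    show ∫ s in (0:ℝ)..t, ξ (t - s) * φ t * φ s = ∫ s in (0:ℝ)..t, ξ' (t - s) * φ' t * φ' s
    apply intervalIntegral.integral_congr
    intro s hs
    rw [Set.uIcc_of_le ht.1] at hs
    show ξ (t - s) * φ t * φ s = ξ' (t - s) * φ' t * φ' s
    have hts : t - s ∈ Set.Icc (0:ℝ) T := ⟨by linarith [hs.2], by linarith [hs.1, ht.2]⟩
    have h1 : ξ' (t - s) = ξ (t - s) := by simp only [hξ']; rw [hceq _ hts]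
    have h2 : φ' t = φ t := by simp only [hφ']; rw [hceq _ ⟨ht.1, ht.2⟩]
    have h3 : φ' s = φ s := by simp only [hφ']; rw [hceq _ ⟨hs.1, hs.2.trans ht.2⟩]
    rw [h1, h2, h3]
  rw [heq]
  exact PosTypeKernel.aux T hT0 ξ' φ' M hξ'anti hξ'nn hξ'conv hφ'cont hM
end

section
/- Let K ∈ L¹(0,T) be nonnegative with ξ(t) = ∫ₜᵀ K(s)ds, ξ(0) = κ, and let θ, v : [0,T] → V be such that v(t) = ∫ₜ^ε θ(τ)dτ (so v(ε) = 0, v̇ = −θ). Then −2∫₀^ε ∫₀ᵗ K(t−s) a(θ(s), v(t)) ds dt = −κ‖v(0)‖²_V + 2∫₀^ε ∫ₛ^ε ξ(t−s) a(θ(s), θ(t)) dt ds, where a is a symmetric bilinear form and ‖w‖²_V = a(w,w). -/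
open MeasureTheory
open scoped RealInnerProductSpace

/-- Fubini for iterated interval integrals over a triangle. -/
private lemma triangle_swap {E : Type*} [NormedAddCommGroup E] [NormedSpace ℝ E]
    {a b : ℝ} (hab : a ≤ b) (f : ℝ → ℝ → E)
    (hf : Integrable (fun p : ℝ × ℝ => f p.1 p.2)
      ((volume.restrict (Set.Ioc a b)).prod (volume.restrict (Set.Ioc a b)))) :
    (∫ t in a..b, ∫ s in a..t, f s t) = ∫ s in a..b, ∫ t in s..b, f s t := by
  set μ := volume.restrict (Set.Ioc a b) with hμ
  set g : ℝ × ℝ → E := ({p : ℝ × ℝ | p.1 ≤ p.2}).indicator (fun p => f p.1 p.2) with hg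
  have hmeas : MeasurableSet {p : ℝ × ℝ | p.1 ≤ p.2} :=
    measurableSet_le measurable_fst measurable_snd
  have hgint : Integrable g (μ.prod μ) := hf.indicator hmeas
  have hswap : (∫ s, (∫ t, g (s, t) ∂μ) ∂μ) = ∫ t, (∫ s, g (s, t) ∂μ) ∂μ :=
    integral_integral_swap (f := fun s t => g (s, t)) hgint
  have h1 : (∫ t in a..b, ∫ s in a..t, f s t) = ∫ t, (∫ s, g (s, t) ∂μ) ∂μ := by
    rw [intervalIntegral.integral_of_le hab]
    refine setIntegral_congr_fun measurableSet_Ioc (fun t ht => ?_)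
    have hgt : (fun s => g (s, t)) = (Set.Iic t).indicator (fun s => f s t) := by
      funext s
      by_cases h : s ≤ t <;>
        simp [hg, Set.indicator, h]
    calc (∫ s in a..t, f s t) = ∫ s in Set.Ioc a t, f s t :=
          intervalIntegral.integral_of_le ht.1.le
      _ = ∫ s in Set.Ioc a b ∩ Set.Iic t, f s t := by
          rw [Set.Ioc_inter_Iic, inf_eq_right.mpr ht.2]
      _ = ∫ s, (Set.Iic t).indicator (fun s => f s t) s ∂μ :=
          (setIntegral_indicator measurableSet_Iic).symm
      _ = ∫ s, g (s, t) ∂μ := by rw [← hgt]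
  have h2 : (∫ s in a..b, ∫ t in s..b, f s t) = ∫ s, (∫ t, g (s, t) ∂μ) ∂μ := by
    rw [intervalIntegral.integral_of_le hab]
    refine setIntegral_congr_fun measurableSet_Ioc (fun s hs => ?_)
    have hgs : (fun t => g (s, t)) = (Set.Ici s).indicator (fun t => f s t) := by
      funext t
      by_cases h : s ≤ t <;>
        simp [hg, Set.indicator, h]
    have hIcc : Set.Ioc a b ∩ Set.Ici s = Set.Icc s b := by
      ext x
      constructor
      · rintro ⟨⟨_, hx2⟩, hx3⟩; exact ⟨hx3, hx2⟩
      · rintro ⟨hx1, hx2⟩; exact ⟨⟨lt_of_lt_of_le hs.1 hx1, hx2⟩, hx1⟩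
    calc (∫ t in s..b, f s t) = ∫ t in Set.Ioc s b, f s t :=
          intervalIntegral.integral_of_le hs.2
      _ = ∫ t in Set.Icc s b, f s t := (integral_Icc_eq_integral_Ioc).symm
      _ = ∫ t in Set.Ioc a b ∩ Set.Ici s, f s t := by rw [hIcc]
      _ = ∫ t, (Set.Ici s).indicator (fun t => f s t) t ∂μ :=
          (setIntegral_indicator measurableSet_Ici).symm
      _ = ∫ t, g (s, t) ∂μ := by rw [← hgs]
  rw [h1, h2, hswap]

private lemma shear_integrable {W : ℝ → ℝ} (hW : Integrable W volume) {c d : ℝ}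
    (P : ℝ × ℝ → ℝ) (hP : Continuous P) {C : ℝ}
    (hC : ∀ p : ℝ × ℝ, p.1 ∈ Set.Ioc c d → p.2 ∈ Set.Ioc c d → |P p| ≤ C) :
    Integrable (fun p : ℝ × ℝ => W (p.2 - p.1) * P p)
      ((volume.restrict (Set.Ioc c d)).prod (volume.restrict (Set.Ioc c d))) := by
  have e_mp : MeasurePreserving
      ((fun z : ℝ × ℝ => (z.1 - z.2, z.2)) ∘ Prod.swap)
      ((volume : Measure ℝ).prod volume) ((volume : Measure ℝ).prod volume) :=
    (measurePreserving_sub_prod volume volume).comp Measure.measurePreserving_swap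
  have hone : Integrable ((Set.Ioc c d).indicator (fun _ => (1:ℝ))) volume :=
    (integrable_indicator_iff measurableSet_Ioc).mpr
      ((integrableOn_const_iff).mpr (Or.inr measure_Ioc_lt_top))
  have hind : Integrable
      (fun q : ℝ × ℝ => W q.1 * (Set.Ioc c d).indicator (fun _ => (1:ℝ)) q.2)
      ((volume : Measure ℝ).prod volume) := hW.mul_prod hone
  have hU : Integrable
      (fun p : ℝ × ℝ => W (p.2 - p.1) * (Set.Ioc c d).indicator (fun _ => (1:ℝ)) p.1)
      ((volume : Measure ℝ).prod volume) := by
    have := (e_mp.integrable_comp hind.aestronglyMeasurable).mpr hind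
    simpa [Function.comp_def] using this
  set U : ℝ × ℝ → ℝ :=
    fun p => W (p.2 - p.1) * (Set.Ioc c d).indicator (fun _ => (1:ℝ)) p.1 with hUdef
  rw [Measure.prod_restrict]
  have hae : ∀ᵐ p : ℝ × ℝ ∂((volume : Measure ℝ).prod volume).restrict
      (Set.Ioc c d ×ˢ Set.Ioc c d), p ∈ Set.Ioc c d ×ˢ Set.Ioc c d :=
    ae_restrict_mem (measurableSet_Ioc.prod measurableSet_Ioc)
  have hU' : Integrable (fun p : ℝ × ℝ => U p * P p)
      (((volume : Measure ℝ).prod volume).restrict (Set.Ioc c d ×ˢ Set.Ioc c d)) := by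
    refine Integrable.mono' ((hU.norm.const_mul C).restrict)
      (hU.aestronglyMeasurable.restrict.mul hP.aestronglyMeasurable) ?_
    filter_upwards [hae] with p hp
    have h1 : ‖P p‖ ≤ C := by rw [Real.norm_eq_abs]; exact hC p hp.1 hp.2
    calc ‖U p * P p‖ = ‖U p‖ * ‖P p‖ := norm_mul _ _
      _ ≤ ‖U p‖ * C := mul_le_mul_of_nonneg_left h1 (norm_nonneg _)
      _ = C * ‖U p‖ := mul_comm _ _
  refine hU'.congr ?_
  filter_upwards [hae] with p hp
  simp [hUdef, Set.indicator_of_mem hp.1]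

/-- Key algebraic identity in the energy error analysis: with `ξ(t) = ∫ₜᵀ K(s) ds`,
`κ = ξ(0)`, and `v(t) = ∫ₜ^ε θ(τ) dτ` (so `v(ε) = 0`, `v̇ = -θ`),
`-2∫₀^ε ∫₀ᵗ K(t-s) a(θ(s), v(t)) ds dt
  = -κ ‖v(0)‖²_V + 2∫₀^ε ∫ₛ^ε ξ(t-s) a(θ(s), θ(t)) dt ds`,
where `a` is the inner product of `V` and `‖w‖²_V = a(w,w)`. -/
theorem memory_term_identity
    {V : Type*} [NormedAddCommGroup V] [InnerProductSpace ℝ V] [CompleteSpace V]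
    (T ε κ : ℝ) (hT : 0 < T) (hε : ε ∈ Set.Ioc (0:ℝ) T)
    (K : ℝ → ℝ) (hK0 : ∀ s ∈ Set.Icc (0:ℝ) T, 0 ≤ K s)
    (hKint : IntervalIntegrable K volume 0 T)
    (ξ : ℝ → ℝ) (hξ : ∀ t, ξ t = ∫ s in t..T, K s) (hκ : κ = ξ 0)
    (θ : ℝ → V) (hθ : Continuous θ)
    (v : ℝ → V) (hv : ∀ t, v t = ∫ τ in t..ε, θ τ) :
    (-2 : ℝ) * ∫ t in (0:ℝ)..ε, ∫ s in (0:ℝ)..t, K (t - s) * ⟪θ s, v t⟫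
      = -κ * ‖v 0‖ ^ 2
        + 2 * ∫ s in (0:ℝ)..ε, ∫ t in s..ε, ξ (t - s) * ⟪θ s, θ t⟫ := by
  obtain ⟨hε0, hεT⟩ := hε
  -- the globally integrable version of `K`
  set W : ℝ → ℝ := (Set.Ioc 0 T).indicator K with hWdef
  have hWint : Integrable W volume :=
    (integrable_indicator_iff measurableSet_Ioc).mpr hKint.1
  have hWK : ∀ x ∈ Set.Ioc (0:ℝ) T, W x = K x := fun x hx => Set.indicator_of_mem hx K
  have hWii : ∀ a b : ℝ, IntervalIntegrable W volume a b :=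
    fun a b => hWint.intervalIntegrable
  -- facts about v
  have hθii : ∀ a b : ℝ, IntervalIntegrable θ volume a b :=
    fun a b => hθ.intervalIntegrable a b
  have hvfun : v = fun t => -∫ x in ε..t, θ x :=
    funext fun t => by rw [hv t, intervalIntegral.integral_symm]
  have hvcont : Continuous v := by
    rw [hvfun]; exact (intervalIntegral.continuous_primitive hθii ε).neg
  have hvderiv : ∀ s : ℝ, HasDerivAt v (-θ s) s := fun s => by
    rw [hvfun]
    exact (intervalIntegral.integral_hasDerivAt_right (hθii ε s)
      (hθ.stronglyMeasurableAtFilter volume (nhds s)) hθ.continuousAt).neg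
  have hvε : v ε = 0 := by rw [hv ε, intervalIntegral.integral_same]
  -- the function Ξ
  set Xi : ℝ → ℝ := fun r => ∫ u in r..T, W u with hXidef
  have hXicont : Continuous Xi := by
    have h1 : Continuous fun r => ∫ u in T..r, W u :=
      intervalIntegral.continuous_primitive hWii T
    have h2 : Xi = fun r => -∫ u in T..r, W u :=
      funext fun r => intervalIntegral.integral_symm _ _
    rw [h2]; exact h1.neg
  have hXiK : ∀ r ∈ Set.Icc (0:ℝ) T, Xi r = ξ r := by
    intro r hr
    have hXir : Xi r = ∫ u in r..T, W u := rfl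
    rw [hXir, hξ r]
    rw [intervalIntegral.integral_of_le hr.2, intervalIntegral.integral_of_le hr.2]
    exact setIntegral_congr_fun measurableSet_Ioc
      (fun x hx => hWK x ⟨lt_of_le_of_lt hr.1 hx.1, hx.2⟩)
  have hκXi : κ = Xi 0 := by rw [hκ, hXiK 0 ⟨le_rfl, hT.le⟩]
  have hsplit : ∀ r : ℝ, (∫ u in (0:ℝ)..r, W u) = κ - Xi r := by
    intro r
    have h := intervalIntegral.integral_add_adjacent_intervals
      (a := (0:ℝ)) (b := r) (c := T) (hWii 0 r) (hWii r T)
    have h2 : (∫ u in r..T, W u) = Xi r := rfl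
    have h3 : (∫ u in (0:ℝ)..T, W u) = Xi 0 := rfl
    rw [h2, h3] at h
    rw [hκXi]; linarith
  -- inner products as integrals
  have hinner : ∀ s t : ℝ, ⟪θ s, v t⟫ = ∫ τ in t..ε, ⟪θ s, θ τ⟫ := by
    intro s t
    rw [hv t]
    have := (innerSL ℝ (θ s)).intervalIntegral_comp_comm (hθii t ε)
    simpa using this.symm
  -- FTC step
  have hFTC : (∫ s in (0:ℝ)..ε, ⟪θ s, v s⟫) = ‖v 0‖ ^ 2 / 2 := by
    have hd : ∀ s ∈ Set.uIcc (0:ℝ) ε,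
        HasDerivAt (fun t => (⟪v t, v t⟫ : ℝ)) (-(2 * ⟪θ s, v s⟫)) s := by
      intro s _
      have h := (hvderiv s).inner ℝ (hvderiv s)
      have : (⟪v s, -θ s⟫ : ℝ) + ⟪-θ s, v s⟫ = -(2 * ⟪θ s, v s⟫) := by
        rw [inner_neg_right, inner_neg_left, real_inner_comm (v s) (θ s)]; ring
      rwa [this] at h
    have hcont : Continuous fun s => -(2 * (⟪θ s, v s⟫ : ℝ)) :=
      ((continuous_const.mul (hθ.inner hvcont))).neg
    have h2 := intervalIntegral.integral_eq_sub_of_hasDerivAt hd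
      (hcont.intervalIntegrable 0 ε)
    rw [hvε, inner_zero_left] at h2
    have h3 : (∫ s in (0:ℝ)..ε, -(2 * (⟪θ s, v s⟫ : ℝ)))
        = -(2 * ∫ s in (0:ℝ)..ε, (⟪θ s, v s⟫ : ℝ)) := by
      rw [intervalIntegral.integral_neg, intervalIntegral.integral_const_mul]
    rw [h3, real_inner_self_eq_norm_sq] at h2
    linarith
  -- bounds for integrability
  obtain ⟨Mθ, hMθ⟩ := (isCompact_Icc (a := (0:ℝ)) (b := ε)).exists_bound_of_continuousOn
    hθ.continuousOn
  obtain ⟨Mv, hMv⟩ := (isCompact_Icc (a := (0:ℝ)) (b := ε)).exists_bound_of_continuousOn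
    hvcont.continuousOn
  -- replace K by W in the LHS
  have hIW : (∫ t in (0:ℝ)..ε, ∫ s in (0:ℝ)..t, K (t - s) * ⟪θ s, v t⟫)
      = ∫ t in (0:ℝ)..ε, ∫ s in (0:ℝ)..t, W (t - s) * ⟪θ s, v t⟫ := by
    refine intervalIntegral.integral_congr fun t ht => ?_
    rw [Set.uIcc_of_le hε0.le] at ht
    refine (intervalIntegral.integral_congr_ae ?_)
    filter_upwards [compl_mem_ae_iff.mpr (measure_singleton t)] with s hs hs2
    rw [Set.uIoc_of_le ht.1] at hs2
    have hst : s < t := lt_of_le_of_ne hs2.2 (fun h => hs (by simp [h]))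
    have h1 : 0 < t - s := sub_pos.mpr hst
    have h2 : t - s ≤ T := by
      have := hs2.1; have := ht.2; linarith
    rw [hWK (t - s) ⟨h1, h2⟩]
  -- triangle Fubini for the LHS
  have hf₁ : Integrable (fun p : ℝ × ℝ => W (p.2 - p.1) * ⟪θ p.1, v p.2⟫)
      ((volume.restrict (Set.Ioc 0 ε)).prod (volume.restrict (Set.Ioc 0 ε))) := by
    refine shear_integrable hWint (fun p => ⟪θ p.1, v p.2⟫)
      ((hθ.comp continuous_fst).inner (hvcont.comp continuous_snd))
      (C := Mθ * Mv) ?_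
    intro p hp1 hp2
    calc |(⟪θ p.1, v p.2⟫ : ℝ)| ≤ ‖θ p.1‖ * ‖v p.2‖ := abs_real_inner_le_norm _ _
      _ ≤ Mθ * Mv := by
        refine mul_le_mul (hMθ _ ⟨hp1.1.le, hp1.2⟩) (hMv _ ⟨hp2.1.le, hp2.2⟩)
          (norm_nonneg _) ?_
        exact le_trans (norm_nonneg _) (hMθ 0 ⟨le_rfl, hε0.le⟩)
  have hswap1 : (∫ t in (0:ℝ)..ε, ∫ s in (0:ℝ)..t, W (t - s) * ⟪θ s, v t⟫)
      = ∫ s in (0:ℝ)..ε, ∫ t in s..ε, W (t - s) * ⟪θ s, v t⟫ :=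
    triangle_swap hε0.le (fun s t => W (t - s) * ⟪θ s, v t⟫) hf₁
  -- the key inner computation
  have hstep : ∀ s ∈ Set.Icc (0:ℝ) ε, (∫ t in s..ε, W (t - s) * ⟪θ s, v t⟫)
      = κ * ⟪θ s, v s⟫ - ∫ t in s..ε, Xi (t - s) * ⟪θ s, θ t⟫ := by
    intro s hs
    have hsε : s ≤ ε := hs.2
    have hint2 : Integrable (fun p : ℝ × ℝ => W (p.1 - s) * ⟪θ s, θ p.2⟫)
        ((volume.restrict (Set.Ioc s ε)).prod (volume.restrict (Set.Ioc s ε))) := by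
      have hW1 : Integrable (fun t => W (t - s)) (volume.restrict (Set.Ioc s ε)) :=
        (hWint.comp_sub_right s).restrict
      have hg1 : Integrable (fun τ => (⟪θ s, θ τ⟫ : ℝ)) (volume.restrict (Set.Ioc s ε)) :=
        ((continuous_const.inner hθ).intervalIntegrable s ε).1
      exact hW1.mul_prod hg1
    have e1 : (∫ t in s..ε, W (t - s) * ⟪θ s, v t⟫)
        = ∫ t in s..ε, ∫ τ in t..ε, W (t - s) * ⟪θ s, θ τ⟫ := by
      refine intervalIntegral.integral_congr fun t ht => ?_
      rw [hinner s t, ← intervalIntegral.integral_const_mul]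
    have e2 : (∫ τ in s..ε, ∫ t in s..τ, W (t - s) * ⟪θ s, θ τ⟫)
        = ∫ t in s..ε, ∫ τ in t..ε, W (t - s) * ⟪θ s, θ τ⟫ :=
      triangle_swap hsε (fun t τ => W (t - s) * ⟪θ s, θ τ⟫) hint2
    have e3 : (∫ τ in s..ε, ∫ t in s..τ, W (t - s) * ⟪θ s, θ τ⟫)
        = ∫ τ in s..ε, ((κ - Xi (τ - s)) * ⟪θ s, θ τ⟫) := by
      refine intervalIntegral.integral_congr fun τ hτ => ?_
      rw [intervalIntegral.integral_mul_const,
        intervalIntegral.integral_comp_sub_right (fun x => W x) s, sub_self,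
        hsplit (τ - s)]
    have e4 : (∫ τ in s..ε, ((κ - Xi (τ - s)) * ⟪θ s, θ τ⟫))
        = κ * ⟪θ s, v s⟫ - ∫ τ in s..ε, Xi (τ - s) * ⟪θ s, θ τ⟫ := by
      have hi1 : IntervalIntegrable (fun τ => κ * (⟪θ s, θ τ⟫ : ℝ)) volume s ε :=
        (continuous_const.mul (continuous_const.inner hθ)).intervalIntegrable s ε
      have hi2 : IntervalIntegrable (fun τ => Xi (τ - s) * (⟪θ s, θ τ⟫ : ℝ)) volume s ε :=
        ((hXicont.comp (continuous_id.sub continuous_const)).mul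
          (continuous_const.inner hθ)).intervalIntegrable s ε
      have : (fun τ => (κ - Xi (τ - s)) * (⟪θ s, θ τ⟫ : ℝ))
          = fun τ => κ * ⟪θ s, θ τ⟫ - Xi (τ - s) * ⟪θ s, θ τ⟫ := by
        funext τ; ring
      rw [this, intervalIntegral.integral_sub hi1 hi2,
        intervalIntegral.integral_const_mul, ← hinner s s]
    rw [e1, ← e2, e3, e4]
  -- continuity of the remaining parametric integral
  have hGcont : Continuous fun s => ∫ t in s..ε, Xi (t - s) * (⟪θ s, θ t⟫ : ℝ) := by
    have hunc : Continuous (Function.uncurry fun s t => Xi (t - s) * (⟪θ s, θ t⟫ : ℝ)) := by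
      refine Continuous.mul ?_ ?_
      · exact hXicont.comp (continuous_snd.sub continuous_fst)
      · exact (hθ.comp continuous_fst).inner (hθ.comp continuous_snd)
    have h1 : Continuous fun s => ∫ t in ε..s, Xi (t - s) * (⟪θ s, θ t⟫ : ℝ) :=
      intervalIntegral.continuous_parametric_intervalIntegral_of_continuous hunc
        continuous_id
    have h2 : (fun s => ∫ t in s..ε, Xi (t - s) * (⟪θ s, θ t⟫ : ℝ))
        = fun s => -∫ t in ε..s, Xi (t - s) * (⟪θ s, θ t⟫ : ℝ) :=
      funext fun s => by rw [intervalIntegral.integral_symm]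
    rw [h2]; exact h1.neg
  -- assemble the second integral
  have hI2 : (∫ s in (0:ℝ)..ε, ∫ t in s..ε, W (t - s) * ⟪θ s, v t⟫)
      = κ * (‖v 0‖ ^ 2 / 2) - ∫ s in (0:ℝ)..ε, ∫ t in s..ε, Xi (t - s) * ⟪θ s, θ t⟫ := by
    have h1 : (∫ s in (0:ℝ)..ε, ∫ t in s..ε, W (t - s) * ⟪θ s, v t⟫)
        = ∫ s in (0:ℝ)..ε,
            (κ * ⟪θ s, v s⟫ - ∫ t in s..ε, Xi (t - s) * ⟪θ s, θ t⟫) :=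
      intervalIntegral.integral_congr fun s hs =>
        hstep s (by rwa [Set.uIcc_of_le hε0.le] at hs)
    have hi1 : IntervalIntegrable (fun s => κ * (⟪θ s, v s⟫ : ℝ)) volume 0 ε :=
      (continuous_const.mul (hθ.inner hvcont)).intervalIntegrable 0 ε
    have hi2 : IntervalIntegrable
        (fun s => ∫ t in s..ε, Xi (t - s) * (⟪θ s, θ t⟫ : ℝ)) volume 0 ε :=
      hGcont.intervalIntegrable 0 ε
    rw [h1, intervalIntegral.integral_sub hi1 hi2,
      intervalIntegral.integral_const_mul, hFTC]
  -- replace ξ by Xi in the RHS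
  have hBW : (∫ s in (0:ℝ)..ε, ∫ t in s..ε, ξ (t - s) * ⟪θ s, θ t⟫)
      = ∫ s in (0:ℝ)..ε, ∫ t in s..ε, Xi (t - s) * ⟪θ s, θ t⟫ := by
    refine intervalIntegral.integral_congr fun s hs => ?_
    rw [Set.uIcc_of_le hε0.le] at hs
    refine intervalIntegral.integral_congr fun t ht => ?_
    rw [Set.uIcc_of_le hs.2] at ht
    rw [hXiK (t - s) ⟨sub_nonneg.mpr ht.1, by
      have := ht.2; have := hs.1; linarith⟩]
  rw [hIW, hswap1, hI2, hBW]
  ring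
end

section
/- Let K ∈ L¹(0,T) be nonnegative with tail ξ(t) = ∫ₜᵀ K(s)ds, ξ(0) = κ < 1, and let θ : [0,T] → V be continuously differentiable (with values in a space with symmetric bilinear form a and norm ‖·‖_V) with θ(0) = 0. Then the identity −2∫₀ᵗ∫₀^τ K(τ−s) a(θ(s), θ̇(τ)) ds dτ = −κ‖θ(t)‖²_V + 2∫₀ᵗ∫₀^τ ξ(τ−s) a(θ̇(s), θ̇(τ)) ds dτ holds. -/
open MeasureTheory
open scoped RealInnerProductSpace

/-- Triangle Fubini for a product integrand: swapping the order of integration over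
the triangle `{(u, r) : 0 < u, 0 < r, u + r ≤ a}`. -/
lemma tri_swap (a : ℝ) (ha : 0 ≤ a) (f g : ℝ → ℝ)
    (hf : IntegrableOn f (Set.Ioc 0 a)) (hg : Continuous g) :
    (∫ u in (0:ℝ)..a, f u * ∫ r in (0:ℝ)..(a - u), g r)
      = ∫ r in (0:ℝ)..a, (∫ u in (0:ℝ)..(a - r), f u) * g r := by
  set S : Set (ℝ × ℝ) := {p | 0 < p.1 ∧ 0 < p.2 ∧ p.1 + p.2 ≤ a} with hS
  have hSm : MeasurableSet S := by
    have : S = ({p : ℝ × ℝ | 0 < p.1} ∩ {p | 0 < p.2}) ∩ {p | p.1 + p.2 ≤ a} := by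
      ext p; simp [hS, and_assoc]
    rw [this]
    exact ((measurableSet_lt measurable_const measurable_fst).inter
      (measurableSet_lt measurable_const measurable_snd)).inter
      (measurableSet_le (measurable_fst.add measurable_snd) measurable_const)
  set F : ℝ → ℝ → ℝ := fun u r => S.indicator (fun p => f p.1 * g p.2) (u, r) with hF
  have hgi : IntegrableOn g (Set.Ioc 0 a) := (hg.intervalIntegrable 0 a).1
  have hint : Integrable (Function.uncurry F) (volume.prod volume) := by
    have h1 : Integrable ((Set.Ioc (0:ℝ) a).indicator f) :=
      (integrable_indicator_iff measurableSet_Ioc).2 hf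
    have h2 : Integrable ((Set.Ioc (0:ℝ) a).indicator g) :=
      (integrable_indicator_iff measurableSet_Ioc).2 hgi
    have h3 := h1.mul_prod h2
    have heq : Function.uncurry F = S.indicator
        (fun z : ℝ × ℝ => (Set.Ioc (0:ℝ) a).indicator f z.1 *
          (Set.Ioc (0:ℝ) a).indicator g z.2) := by
      funext p
      by_cases hp : p ∈ S
      · obtain ⟨hp1, hp2, hp3⟩ := hp
        have m1 : p.1 ∈ Set.Ioc (0:ℝ) a := ⟨hp1, by linarith⟩
        have m2 : p.2 ∈ Set.Ioc (0:ℝ) a := ⟨hp2, by linarith⟩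
        have hp' : p ∈ S := ⟨hp1, hp2, hp3⟩
        simp [Function.uncurry, hF, Set.indicator_of_mem hp',
          Set.indicator_of_mem m1, Set.indicator_of_mem m2]
      · simp [Function.uncurry, hF, Set.indicator_of_notMem hp]
    rw [heq]
    exact h3.indicator hSm
  have swap := MeasureTheory.integral_integral_swap hint
  -- identify the left-hand side
  have e1 : ∀ u, (∫ r, F u r)
      = (Set.Ioc (0:ℝ) a).indicator (fun u => f u * ∫ r in (0:ℝ)..(a - u), g r) u := by
    intro u
    by_cases hu : u ∈ Set.Ioc (0:ℝ) a
    · have hset : (fun r => F u r) = (Set.Ioc (0:ℝ) (a - u)).indicator (fun r => f u * g r) := by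
        funext r
        by_cases hr : r ∈ Set.Ioc (0:ℝ) (a - u)
        · have hm : (u, r) ∈ S := ⟨hu.1, hr.1, by have := hr.2; simp at this ⊢; linarith⟩
          simp [hF, Set.indicator_of_mem hm, Set.indicator_of_mem hr]
        · have hm : (u, r) ∉ S := by
            intro hmem
            exact hr ⟨hmem.2.1, by have := hmem.2.2; simp at this ⊢; linarith⟩
          simp [hF, Set.indicator_of_notMem hm, Set.indicator_of_notMem hr]
      rw [hset, Set.indicator_of_mem hu, integral_indicator measurableSet_Ioc,
        ← intervalIntegral.integral_of_le (by linarith [hu.2] : (0:ℝ) ≤ a - u),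
        intervalIntegral.integral_const_mul]
    · have hzero : (fun r => F u r) = fun _ => (0 : ℝ) := by
        funext r
        have hm : (u, r) ∉ S := by
          intro hmem
          rcases hmem with ⟨h1, h2, h3⟩
          exact hu ⟨h1, by linarith⟩
        simp [hF, Set.indicator_of_notMem hm]
      rw [hzero, Set.indicator_of_notMem hu]
      simp
  -- identify the right-hand side
  have e2 : ∀ r, (∫ u, F u r)
      = (Set.Ioc (0:ℝ) a).indicator (fun r => (∫ u in (0:ℝ)..(a - r), f u) * g r) r := by
    intro r
    by_cases hr : r ∈ Set.Ioc (0:ℝ) a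
    · have hset : (fun u => F u r) = (Set.Ioc (0:ℝ) (a - r)).indicator (fun u => f u * g r) := by
        funext u
        by_cases hu : u ∈ Set.Ioc (0:ℝ) (a - r)
        · have hm : (u, r) ∈ S := ⟨hu.1, hr.1, by have := hu.2; simp at this ⊢; linarith⟩
          simp [hF, Set.indicator_of_mem hm, Set.indicator_of_mem hu]
        · have hm : (u, r) ∉ S := by
            intro hmem
            exact hu ⟨hmem.1, by have := hmem.2.2; simp at this ⊢; linarith⟩
          simp [hF, Set.indicator_of_notMem hm, Set.indicator_of_notMem hu]
      rw [hset, Set.indicator_of_mem hr, integral_indicator measurableSet_Ioc,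
        integral_mul_const, ← intervalIntegral.integral_of_le (by linarith [hr.2] : (0:ℝ) ≤ a - r)]
    · have hzero : (fun u => F u r) = fun _ => (0 : ℝ) := by
        funext u
        have hm : (u, r) ∉ S := by
          intro hmem
          rcases hmem with ⟨h1, h2, h3⟩
          exact hr ⟨h2, by linarith⟩
        simp [hF, Set.indicator_of_notMem hm]
      rw [hzero, Set.indicator_of_notMem hr]
      simp
  have hL : (∫ u, ∫ r, F u r) = ∫ u in (0:ℝ)..a, f u * ∫ r in (0:ℝ)..(a - u), g r := by
    rw [intervalIntegral.integral_of_le ha, ← integral_indicator measurableSet_Ioc]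
    exact integral_congr_ae (Filter.Eventually.of_forall e1)
  have hR : (∫ r, ∫ u, F u r) = ∫ r in (0:ℝ)..a, (∫ u in (0:ℝ)..(a - r), f u) * g r := by
    rw [intervalIntegral.integral_of_le ha, ← integral_indicator measurableSet_Ioc]
    exact integral_congr_ae (Filter.Eventually.of_forall e2)
  rw [← hL, ← hR]
  exact swap

/-- Key identity for the velocity/H¹ error estimates: if `K ≥ 0` is integrable on
`[0,T]` with tail `ξ(t) = ∫ₜᵀ K(s) ds`, `ξ(0) = κ < 1`, and `θ` is C¹ with `θ(0) = 0`,
then `-2∫₀ᵗ∫₀^τ K(τ-s) a(θ(s), θ̇(τ)) ds dτ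
  = -κ ‖θ(t)‖²_V + 2∫₀ᵗ∫₀^τ ξ(τ-s) a(θ̇(s), θ̇(τ)) ds dτ`,
where `a` is the inner product of `V` and `‖·‖_V` the associated norm. -/
theorem velocity_memory_identity
    {V : Type*} [NormedAddCommGroup V] [InnerProductSpace ℝ V] [CompleteSpace V]
    (T κ : ℝ) (hT : 0 < T)
    (K : ℝ → ℝ) (hK0 : ∀ s ∈ Set.Icc (0:ℝ) T, 0 ≤ K s)
    (hKint : IntervalIntegrable K volume 0 T)
    (ξ : ℝ → ℝ) (hξ : ∀ t, ξ t = ∫ s in t..T, K s)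
    (hκ : ξ 0 = κ) (hκ1 : κ < 1)
    (θ θ' : ℝ → V) (hθ : ∀ t, HasDerivAt θ (θ' t) t) (hθ'c : Continuous θ')
    (hθ0 : θ 0 = 0) :
    ∀ t ∈ Set.Icc (0:ℝ) T,
      (-2 : ℝ) * ∫ τ in (0:ℝ)..t, ∫ s in (0:ℝ)..τ, K (τ - s) * ⟪θ s, θ' τ⟫
        = -κ * ‖θ t‖ ^ 2
          + 2 * ∫ τ in (0:ℝ)..t, ∫ s in (0:ℝ)..τ, ξ (τ - s) * ⟪θ' s, θ' τ⟫ := by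
  intro t ht
  obtain ⟨ht0, htT⟩ := ht
  have hθcont : Continuous θ := continuous_iff_continuousAt.2 fun x => (hθ x).continuousAt
  have hKicc : IntegrableOn K (Set.Icc 0 T) :=
    (integrableOn_Icc_iff_integrableOn_Ioc (by simp)).2 hKint.1
  have hKsub : ∀ x ∈ Set.Icc (0:ℝ) T, IntervalIntegrable K volume 0 x := by
    intro x hx
    refine hKint.mono_set ?_
    rw [Set.uIcc_of_le hx.1, Set.uIcc_of_le hT.le]
    exact Set.Icc_subset_Icc le_rfl hx.2
  have hsplit : ∀ x ∈ Set.Icc (0:ℝ) T, (∫ s in (0:ℝ)..x, K s) = κ - ξ x := by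
    intro x hx
    have h1 : IntervalIntegrable K volume x T := by
      refine hKint.mono_set ?_
      rw [Set.uIcc_of_le hx.2, Set.uIcc_of_le hT.le]
      exact Set.Icc_subset_Icc hx.1 le_rfl
    have hadd := intervalIntegral.integral_add_adjacent_intervals (hKsub x hx) h1
    have hk : κ = ∫ s in (0:ℝ)..T, K s := by rw [← hκ, hξ 0]
    rw [hξ x]
    linarith
  have hξcont : ContinuousOn ξ (Set.Icc 0 T) := by
    have hprim : ContinuousOn (fun x => ∫ s in x..T, K s) (Set.Icc 0 T) := by
      have := intervalIntegral.continuousOn_primitive_interval_left (a := 0) (b := T)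
        (μ := volume) (f := K) (by rwa [Set.uIcc_of_le hT.le])
      rwa [Set.uIcc_of_le hT.le] at this
    exact hprim.congr fun x _ => hξ x
  -- a continuous extension of ξ by clamping
  set cl : ℝ → ℝ := fun x => min (max x 0) T with hcl
  have hclmem : ∀ x, cl x ∈ Set.Icc (0:ℝ) T :=
    fun x => ⟨le_min (le_max_right x 0) hT.le, min_le_right _ _⟩
  have hclid : ∀ x ∈ Set.Icc (0:ℝ) T, cl x = x := by
    intro x hx
    simp [hcl, max_eq_left hx.1, min_eq_left hx.2]
  set ξc : ℝ → ℝ := fun x => ξ (cl x) with hξcdef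
  have hξcC : Continuous ξc := hξcont.comp_continuous (by fun_prop) hclmem
  have hξceq : ∀ x ∈ Set.Icc (0:ℝ) T, ξc x = ξ x := by
    intro x hx
    simp only [hξcdef, hclid x hx]
  set B : ℝ → ℝ := fun τ => ∫ s in (0:ℝ)..τ, ξc (τ - s) * ⟪θ' s, θ' τ⟫ with hBdef
  have hBc : Continuous B := by
    apply intervalIntegral.continuous_parametric_intervalIntegral_of_continuous (μ := volume)
      (f := fun τ s => ξc (τ - s) * ⟪θ' s, θ' τ⟫) (s := fun τ => τ) ?_ continuous_id
    exact Continuous.mul (hξcC.comp (continuous_fst.sub continuous_snd))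
      (Continuous.inner (hθ'c.comp continuous_snd) (hθ'c.comp continuous_fst))
  -- the key inner identity, via Fubini on the triangle
  have key : ∀ τ ∈ Set.Icc (0:ℝ) T,
      (∫ s in (0:ℝ)..τ, K (τ - s) * ⟪θ s, θ' τ⟫) = κ * ⟪θ τ, θ' τ⟫ - B τ := by
    intro τ hτ
    obtain ⟨hτ0, hτT⟩ := hτ
    set c' : ℝ → ℝ := fun s => ⟪θ' s, θ' τ⟫ with hc'def
    have hc'c : Continuous c' := Continuous.inner hθ'c continuous_const
    have hcD : ∀ s : ℝ, HasDerivAt (fun s => (⟪θ s, θ' τ⟫ : ℝ)) (c' s) s := by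
      intro s
      have := HasDerivAt.inner ℝ (hθ s) (hasDerivAt_const s (θ' τ))
      simpa [hc'def] using this
    have hFTC : ∀ x : ℝ, (∫ r in (0:ℝ)..x, c' r) = ⟪θ x, θ' τ⟫ := by
      intro x
      rw [intervalIntegral.integral_eq_sub_of_hasDerivAt (fun r _ => hcD r)
        (hc'c.intervalIntegrable 0 x)]
      simp [hθ0]
    have hsub1 : (∫ s in (0:ℝ)..τ, K (τ - s) * ⟪θ s, θ' τ⟫)
        = ∫ u in (0:ℝ)..τ, K u * ⟪θ (τ - u), θ' τ⟫ := by
      have := intervalIntegral.integral_comp_sub_left (a := 0) (b := τ)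
        (fun u => K u * ⟪θ (τ - u), θ' τ⟫) τ
      simpa using this
    have hsub2 : (∫ u in (0:ℝ)..τ, K u * ⟪θ (τ - u), θ' τ⟫)
        = ∫ u in (0:ℝ)..τ, K u * ∫ r in (0:ℝ)..(τ - u), c' r := by
      apply intervalIntegral.integral_congr
      intro u _
      dsimp only
      rw [hFTC]
    have hKτ : IntegrableOn K (Set.Ioc 0 τ) := (hKsub τ ⟨hτ0, hτT⟩).1
    have hswap := tri_swap τ hτ0 K c' hKτ hc'c
    have hstep : (∫ r in (0:ℝ)..τ, (∫ u in (0:ℝ)..(τ - r), K u) * c' r)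
        = ∫ r in (0:ℝ)..τ, (κ - ξc (τ - r)) * c' r := by
      apply intervalIntegral.integral_congr
      intro r hr
      rw [Set.uIcc_of_le hτ0] at hr
      have hmem : τ - r ∈ Set.Icc (0:ℝ) T := ⟨by linarith [hr.2], by linarith [hr.1]⟩
      dsimp only
      rw [hsplit _ hmem, hξceq _ hmem]
    have hfinal : (∫ r in (0:ℝ)..τ, (κ - ξc (τ - r)) * c' r) = κ * ⟪θ τ, θ' τ⟫ - B τ := by
      have h1 : IntervalIntegrable (fun r => κ * c' r) volume 0 τ :=
        (continuous_const.mul hc'c).intervalIntegrable _ _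
      have h2 : IntervalIntegrable (fun r => ξc (τ - r) * c' r) volume 0 τ :=
        ((hξcC.comp (continuous_const.sub continuous_id)).mul hc'c).intervalIntegrable _ _
      have hexp : (fun r => (κ - ξc (τ - r)) * c' r)
          = fun r => κ * c' r - ξc (τ - r) * c' r := by
        funext r; ring
      rw [hexp, intervalIntegral.integral_sub h1 h2,
        intervalIntegral.integral_const_mul, hFTC τ]
    rw [hsub1, hsub2, hswap, hstep, hfinal]
  -- FTC for the squared norm
  have hnorm : (∫ τ in (0:ℝ)..t, (⟪θ τ, θ' τ⟫ : ℝ)) = ‖θ t‖ ^ 2 / 2 := by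
    have hD : ∀ τ : ℝ, HasDerivAt (fun τ => (⟪θ τ, θ τ⟫ : ℝ)) (2 * ⟪θ τ, θ' τ⟫) τ := by
      intro τ
      have := HasDerivAt.inner ℝ (hθ τ) (hθ τ)
      simpa [real_inner_comm, two_mul] using this
    have hInt : IntervalIntegrable (fun τ => 2 * (⟪θ τ, θ' τ⟫ : ℝ)) volume 0 t :=
      (continuous_const.mul (Continuous.inner hθcont hθ'c)).intervalIntegrable _ _
    have hI := intervalIntegral.integral_eq_sub_of_hasDerivAt (fun τ _ => hD τ) hInt
    rw [intervalIntegral.integral_const_mul, hθ0] at hI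
    simp only [inner_zero_left, sub_zero] at hI
    have hn : (⟪θ t, θ t⟫ : ℝ) = ‖θ t‖ ^ 2 := real_inner_self_eq_norm_sq (θ t)
    linarith
  have hIcc : Set.uIcc (0:ℝ) t = Set.Icc 0 t := Set.uIcc_of_le ht0
  have hcongr1 : (∫ τ in (0:ℝ)..t, ∫ s in (0:ℝ)..τ, K (τ - s) * ⟪θ s, θ' τ⟫)
      = ∫ τ in (0:ℝ)..t, (κ * ⟪θ τ, θ' τ⟫ - B τ) := by
    apply intervalIntegral.integral_congr
    intro τ hτ
    rw [hIcc] at hτ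
    exact key τ ⟨hτ.1, le_trans hτ.2 htT⟩
  have hcongr2 : (∫ τ in (0:ℝ)..t, ∫ s in (0:ℝ)..τ, ξ (τ - s) * ⟪θ' s, θ' τ⟫)
      = ∫ τ in (0:ℝ)..t, B τ := by
    apply intervalIntegral.integral_congr
    intro τ hτ
    rw [hIcc] at hτ
    apply intervalIntegral.integral_congr
    intro s hs
    rw [Set.uIcc_of_le hτ.1] at hs
    have hmem : τ - s ∈ Set.Icc (0:ℝ) T :=
      ⟨by linarith [hs.2], by linarith [hs.1, hτ.2, htT]⟩
    dsimp only
    rw [← hξceq _ hmem]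
  have hsub : (∫ τ in (0:ℝ)..t, (κ * ⟪θ τ, θ' τ⟫ - B τ))
      = κ * (‖θ t‖ ^ 2 / 2) - ∫ τ in (0:ℝ)..t, B τ := by
    rw [intervalIntegral.integral_sub
      ((continuous_const.mul (Continuous.inner hθcont hθ'c)).intervalIntegrable _ _ :
        IntervalIntegrable (fun τ => κ * ⟪θ τ, θ' τ⟫) volume 0 t)
      (hBc.intervalIntegrable _ _), intervalIntegral.integral_const_mul, hnorm]
  rw [hcongr1, hcongr2, hsub]
  ring
end
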